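/- arXiv:2111.00681 — 7 statements merged into one kernel-verified Lean document; each statement's English description precedes it below -/
import Mathlib

section
/- Let I ⊆ k[x₁,…,xₙ] be a monomial ideal and k a positive integer. For a ∈ ℤⁿ_{≥0}, the monomial x^a lies in the integral closure of I^k if and only if a/k lies in the Newton polyhedron NP(I). -/
open MvPolynomial Pointwise

/-- The Newton polyhedron of a monomial ideal: convex hull of exponent vectors of monomials in `I`. -/
def NP {n : ℕ} {𝕜 : Type*} [Field 𝕜] (I : Ideal (MvPolynomial (Fin n) 𝕜)) : Set (Fin n → ℝ) :=
  convexHull ℝ {x | ∃ a : Fin n →₀ ℕ, monomial a (1 : 𝕜) ∈ I ∧ x = fun i => (a i : ℝ)}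

/-- `I` is a monomial ideal: generated by monomials. -/
def IsMonomialIdeal {n : ℕ} {𝕜 : Type*} [Field 𝕜] (I : Ideal (MvPolynomial (Fin n) 𝕜)) : Prop :=
  ∃ S : Set (Fin n →₀ ℕ), I = Ideal.span ((fun a => monomial a (1 : 𝕜)) '' S)

/-- The integral closure of an ideal `I`: elements satisfying an equation of integral dependence
`f^m + c₁ f^{m-1} + ⋯ + c_m = 0` with `c_i ∈ I^i`. -/
def intCl {R : Type*} [CommRing R] (I : Ideal R) : Set R :=
  {f | ∃ m : ℕ, 0 < m ∧ ∃ c : ℕ → R, (∀ i ∈ Finset.Icc 1 m, c i ∈ I ^ i) ∧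
    f ^ m + ∑ i ∈ Finset.Icc 1 m, c i * f ^ (m - i) = 0}

/-- The Newton–Okounkov body of a graded family of monomial ideals. -/
def NObody {n : ℕ} {𝕜 : Type*} [Field 𝕜] (F : ℕ → Ideal (MvPolynomial (Fin n) 𝕜)) :
    Set (Fin n → ℝ) :=
  closure (⋃ k : ℕ, {x | 0 < k ∧ ∃ a : Fin n →₀ ℕ, monomial a (1 : 𝕜) ∈ F k ∧
    x = fun i => (a i : ℝ) / k})

/-- The limiting body `⋃ₖ (1/k) NP(I_k)` of a graded family. -/
def limitBody {n : ℕ} {𝕜 : Type*} [Field 𝕜] (F : ℕ → Ideal (MvPolynomial (Fin n) 𝕜)) :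
    Set (Fin n → ℝ) :=
  ⋃ k : ℕ, ⋃ (_ : 0 < k), ((k : ℝ)⁻¹) • NP (F k)

/-- A polyhedron: a finite intersection of closed half-spaces. -/
def IsPolyhedron {n : ℕ} (P : Set (Fin n → ℝ)) : Prop :=
  ∃ H : Finset ((Fin n → ℝ) × ℝ), P = {x | ∀ h ∈ H, h.2 ≤ ∑ i, h.1 i * x i}

/-- Maximum dimension of a compact face (faces are taken to be extreme subsets). -/
noncomputable def mdc {n : ℕ} (P : Set (Fin n → ℝ)) : ℕ :=
  sSup {d | ∃ F : Set (Fin n → ℝ), F.Nonempty ∧ IsExtreme ℝ P F ∧ IsCompact F ∧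
    Module.finrank ℝ (vectorSpan ℝ F) = d}

/-- The symbolic power family of a monomial ideal of linear-power type:
`I^{(k)} = ⋂ⱼ 𝔭ⱼ^{k ωⱼ}` where `𝔭ⱼ` is generated by the variables in `supp j`. -/
noncomputable def symb {n : ℕ} {𝕜 : Type*} [Field 𝕜] {ι : Type*} [Fintype ι]
    (supp : ι → Finset (Fin n)) (ω : ι → ℕ) (k : ℕ) : Ideal (MvPolynomial (Fin n) 𝕜) :=
  ⨅ j, (Ideal.span ((fun i => (X i : MvPolynomial (Fin n) 𝕜)) '' (supp j : Set (Fin n)))) ^ (k * ω j)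

/-- The symbolic polyhedron of a monomial ideal of linear-power type. -/
def SPset {n : ℕ} {ι : Type*} (supp : ι → Finset (Fin n)) (ω : ι → ℕ) : Set (Fin n → ℝ) :=
  {x | (∀ i, 0 ≤ x i) ∧ ∀ j, (ω j : ℝ) ≤ ∑ i ∈ supp j, x i}


-- Auxiliary lemmas --------------------------------------------------------

lemma support_span_mono {n : ℕ} {𝕜 : Type*} [Field 𝕜] {S₀ : Set (Fin n →₀ ℕ)}
    {p : MvPolynomial (Fin n) 𝕜}
    (hp : p ∈ Ideal.span ((fun a => monomial a (1 : 𝕜)) '' S₀)) :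
    ∀ d ∈ p.support, ∃ e ∈ S₀, e ≤ d := by
  classical
  refine Submodule.span_induction ?_ ?_ ?_ ?_ hp
  · rintro x ⟨e, he, rfl⟩ d hd
    rw [MvPolynomial.support_monomial] at hd
    simp only [if_neg (one_ne_zero : (1:𝕜) ≠ 0), Finset.mem_singleton] at hd
    exact ⟨e, he, le_of_eq hd.symm⟩
  · intro d hd; simp at hd
  · intro x y hx hy ihx ihy d hd
    rcases Finset.mem_union.1 (MvPolynomial.support_add hd) with h | h
    · exact ihx d h
    · exact ihy d h
  · intro r x hx ihx d hd
    rw [smul_eq_mul] at hd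
    obtain ⟨u, hu, v, hv, rfl⟩ := Finset.mem_add.1 (MvPolynomial.support_mul r x hd)
    obtain ⟨e, he, hle⟩ := ihx v hv
    exact ⟨e, he, hle.trans (le_add_self)⟩

lemma support_pow_mono {n : ℕ} {𝕜 : Type*} [Field 𝕜] {I : Ideal (MvPolynomial (Fin n) 𝕜)}
    (hI : IsMonomialIdeal I) :
    ∀ (N : ℕ) (p : MvPolynomial (Fin n) 𝕜), p ∈ I ^ N → ∀ d ∈ p.support,
      ∃ g : Fin N → (Fin n →₀ ℕ), (∀ j, monomial (g j) (1 : 𝕜) ∈ I) ∧ ∑ j, g j ≤ d := by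
  classical
  obtain ⟨S₀, hS⟩ := hI
  intro N
  induction N with
  | zero =>
    intro p _ d _
    exact ⟨Fin.elim0, fun j => j.elim0, by simp⟩
  | succ N ih =>
    intro p hp d hd
    rw [pow_succ] at hp
    revert d hd
    refine Submodule.mul_induction_on hp ?_ ?_
    · intro x hx y hy d hd
      obtain ⟨u, hu, v, hv, rfl⟩ := Finset.mem_add.1 (MvPolynomial.support_mul x y hd)
      obtain ⟨g, hg, hgle⟩ := ih x hx u hu
      obtain ⟨e, he, hev⟩ := support_span_mono (hS ▸ hy) v hv
      refine ⟨Fin.cons e g, ?_, ?_⟩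
      · intro j
        refine Fin.cases ?_ ?_ j
        · simpa using hS ▸ Ideal.subset_span ⟨e, he, rfl⟩
        · intro j; simpa using hg j
      · rw [Fin.sum_cons, add_comm u v]
        exact add_le_add hev hgle
    · intro x y ihx ihy d hd
      rcases Finset.mem_union.1 (MvPolynomial.support_add hd) with h | h
      · exact ihx d h
      · exact ihy d h

lemma monomial_prod_mem {n : ℕ} {𝕜 : Type*} [Field 𝕜] {I : Ideal (MvPolynomial (Fin n) 𝕜)}
    {ι : Type*} (s : Finset ι) (e : ι → (Fin n →₀ ℕ)) (c : ι → ℕ)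
    (h : ∀ y ∈ s, monomial (e y) (1 : 𝕜) ∈ I) :
    monomial (∑ y ∈ s, c y • e y) (1 : 𝕜) ∈ I ^ (∑ y ∈ s, c y) := by
  classical
  induction s using Finset.induction_on with
  | empty => simpa using Submodule.mem_top
  | insert b s hnot ih =>
    rw [Finset.sum_insert hnot, Finset.sum_insert hnot, pow_add]
    have h1 : monomial (c b • e b) (1 : 𝕜) ∈ I ^ (c b) := by
      have := Ideal.pow_mem_pow (h b (Finset.mem_insert_self b s)) (c b)
      rwa [monomial_pow, one_pow] at this
    have h2 := ih (fun y hy => h y (Finset.mem_insert_of_mem hy))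
    have := Ideal.mul_mem_mul h1 h2
    rwa [monomial_mul, one_mul] at this


lemma rat_descent {ι N : Type} [Fintype ι] [Fintype N] (v : ι → N → ℚ) (τ : N → ℚ)
    (w : ι → ℝ) (hw : ∀ o, ∑ i, w i * ((v i o : ℚ) : ℝ) = ((τ o : ℚ) : ℝ)) :
    ∃ u : ι → ℚ, ∑ i, u i • v i = τ := by
  classical
  rw [← Submodule.mem_span_range_iff_exists_fun]
  by_contra hτ
  set Q : Submodule ℚ (N → ℚ) := Submodule.span ℚ (Set.range v) with hQ
  have hπ : Q.mkQ τ ≠ 0 := by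
    simpa [Submodule.Quotient.mk_eq_zero] using hτ
  have : ¬ ∀ φ : Module.Dual ℚ ((N → ℚ) ⧸ Q), φ (Q.mkQ τ) = 0 := by
    rw [Module.forall_dual_apply_eq_zero_iff]; exact hπ
  obtain ⟨φ, hφ⟩ := not_forall.1 this
  set ψ : (N → ℚ) →ₗ[ℚ] ℚ := φ.comp Q.mkQ with hψ
  have hψv : ∀ i, ψ (v i) = 0 := by
    intro i
    have : v i ∈ Q := Submodule.subset_span ⟨i, rfl⟩
    simp [hψ, (Submodule.Quotient.mk_eq_zero Q).2 this]
  have key : ∀ x : N → ℚ, ψ x = ∑ o, x o * ψ (fun j => if o = j then 1 else 0) := by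
    intro x
    rw [LinearMap.pi_apply_eq_sum_univ ψ x]
    simp [smul_eq_mul]
  set c : N → ℚ := fun o => ψ (fun j => if o = j then 1 else 0) with hc
  -- real computation
  have hreal : ∑ o, (c o : ℝ) * (τ o : ℝ) = ((ψ τ : ℚ) : ℝ) := by
    rw [key τ]; push_cast; ring_nf
    exact Finset.sum_congr rfl (fun o _ => by ring)
  have hzero : ∑ o, (c o : ℝ) * (τ o : ℝ) = 0 := by
    have : ∀ o, (τ o : ℝ) = ∑ i, w i * ((v i o : ℚ) : ℝ) := fun o => (hw o).symm
    calc ∑ o, (c o : ℝ) * (τ o : ℝ)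
        = ∑ o, ∑ i, (c o : ℝ) * (w i * ((v i o : ℚ) : ℝ)) := by
          refine Finset.sum_congr rfl (fun o _ => ?_)
          rw [this o, Finset.mul_sum]
      _ = ∑ i, w i * ∑ o, (c o : ℝ) * ((v i o : ℚ) : ℝ) := by
          rw [Finset.sum_comm]
          refine Finset.sum_congr rfl (fun i _ => ?_)
          rw [Finset.mul_sum]
          refine Finset.sum_congr rfl (fun o _ => by ring)
      _ = ∑ i, w i * ((ψ (v i) : ℚ) : ℝ) := by
          refine Finset.sum_congr rfl (fun i _ => ?_)
          congr 1
          rw [key (v i)]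
          push_cast
          exact Finset.sum_congr rfl (fun o _ => by ring)
      _ = 0 := by simp [hψv]
  rw [hreal] at hzero
  have : ψ τ = 0 := by exact_mod_cast hzero
  exact hφ (by simpa [hψ] using this)


/-- For a monomial ideal `I` and `k ≥ 1`, the monomial `x^a` lies in the
integral closure of `I^k` iff `a/k ∈ NP(I)`. -/
theorem stmt0 {n : ℕ} {𝕜 : Type*} [Field 𝕜] (I : Ideal (MvPolynomial (Fin n) 𝕜))
    (hI : IsMonomialIdeal I) (k : ℕ) (hk : 0 < k) (a : Fin n →₀ ℕ) :
    monomial a (1 : 𝕜) ∈ intCl (I ^ k) ↔ (fun i => (a i : ℝ) / k) ∈ NP I := by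
  constructor
  · intro hf
    classical
    obtain ⟨m, hm, c, hc, heq⟩ := hf
    have hfm : ∀ j : ℕ, (monomial a (1:𝕜)) ^ j = monomial (j • a) 1 := by
      intro j; rw [monomial_pow, one_pow]
    have h1 : (1:𝕜) + ∑ i ∈ Finset.Icc 1 m, coeff (m • a) (c i * (monomial a (1:𝕜))^(m-i)) = 0 := by
      have h := congrArg (coeff (m • a)) heq
      rwa [coeff_add, coeff_sum, hfm m, coeff_monomial, if_pos rfl, coeff_zero] at h
    have hne : ∃ i ∈ Finset.Icc 1 m, coeff (m • a) (c i * (monomial a (1:𝕜))^(m-i)) ≠ 0 := by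
      by_contra h
      push_neg at h
      rw [Finset.sum_eq_zero h, add_zero] at h1
      exact one_ne_zero h1
    obtain ⟨i, hi, hcne⟩ := hne
    obtain ⟨hi1, him⟩ := Finset.mem_Icc.1 hi
    have hsmul : m • a = i • a + (m - i) • a := by
      rw [← add_smul, Nat.add_sub_cancel' him]
    rw [hsmul, hfm (m - i), coeff_mul_monomial, mul_one] at hcne
    have hsup : i • a ∈ (c i).support := mem_support_iff.2 hcne
    have hci : c i ∈ I ^ (k * i) := by
      have := hc i hi; rwa [← pow_mul] at this
    obtain ⟨g, hg, hgle⟩ := support_pow_mono hI (k * i) (c i) hci (i • a) hsup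
    have hNpos : 0 < k * i := Nat.mul_pos hk hi1
    set j0 : Fin (k * i) := ⟨0, hNpos⟩ with hj0
    set r : Fin n →₀ ℕ := i • a - ∑ j, g j with hr
    set g' : Fin (k * i) → (Fin n →₀ ℕ) := Function.update g j0 (g j0 + r) with hg'def
    have hg' : ∀ j, monomial (g' j) (1:𝕜) ∈ I := by
      intro j
      by_cases hj : j = j0
      · subst hj
        rw [hg'def, Function.update_self]
        have := Ideal.mul_mem_right (monomial r (1:𝕜)) _ (hg j0)
        rwa [monomial_mul, mul_one] at this
      · rw [hg'def, Function.update_of_ne hj]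
        exact hg j
    have hsum' : ∑ j, g' j = i • a := by
      rw [hg'def, Finset.sum_update_of_mem (Finset.mem_univ j0), ← Finset.erase_eq]
      have hsplit : ∑ j, g j = g j0 + ∑ j ∈ Finset.univ.erase j0, g j :=
        (Finset.add_sum_erase _ g (Finset.mem_univ j0)).symm
      have : (g j0 + r) + ∑ j ∈ Finset.univ.erase j0, g j = (∑ j, g j) + r := by
        rw [hsplit]; abel
      rw [this, hr, add_tsub_cancel_of_le hgle]
    have hmem := Finset.centerMass_mem_convexHull (Finset.univ : Finset (Fin (k * i)))
      (w := fun _ => (1:ℝ)) (z := fun j => (fun t => ((g' j t : ℝ))))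
      (s := {x | ∃ b : Fin n →₀ ℕ, monomial b (1 : 𝕜) ∈ I ∧ x = fun i => (b i : ℝ)})
      (fun _ _ => zero_le_one)
      (by simp only [Finset.sum_const, Finset.card_univ, Fintype.card_fin, nsmul_eq_mul, mul_one]
          exact Nat.cast_pos.2 hNpos)
      (fun j _ => Set.mem_setOf.2 ⟨g' j, hg' j, rfl⟩)
    have hcm : (Finset.univ : Finset (Fin (k * i))).centerMass (fun _ => (1:ℝ))
        (fun j => (fun t => ((g' j t : ℝ)))) = fun t => (a t : ℝ) / k := by
      rw [Finset.centerMass]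
      funext t
      simp only [Finset.sum_const, Finset.card_univ, Fintype.card_fin, nsmul_eq_mul, mul_one,
        one_smul, Pi.smul_apply, Finset.sum_apply, smul_eq_mul]
      have hcoord : ∑ j, (g' j t : ℝ) = ((i * a t : ℕ) : ℝ) := by
        have : (∑ j, g' j) t = i * a t := by rw [hsum']; simp [Finsupp.smul_apply]
        rw [← this]
        rw [Finsupp.finset_sum_apply]
        push_cast
        rfl
      rw [hcoord]
      have hkne : (k:ℝ) ≠ 0 := Nat.cast_ne_zero.2 hk.ne'
      have hine : (i:ℝ) ≠ 0 := Nat.cast_ne_zero.2 (Nat.lt_of_lt_of_le Nat.zero_lt_one hi1).ne'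
      push_cast
      field_simp
    rw [hcm] at hmem
    exact hmem
  · intro hq
    classical
    rw [NP] at hq
    obtain ⟨ι, hfin, z, w, hrange, haff, hwpos, hwsum, hwz⟩ :=
      eq_pos_convex_span_of_mem_convexHull hq
    have hzmem : ∀ i : ι, ∃ e : Fin n →₀ ℕ, monomial e (1:𝕜) ∈ I ∧ z i = fun t => (e t : ℝ) :=
      fun i => hrange ⟨i, rfl⟩
    choose e he hze using hzmem
    set v : ι → Option (Fin n) → ℚ := fun i o => o.elim 1 (fun t => (e i t : ℚ)) with hv
    set τ : Option (Fin n) → ℚ := fun o => o.elim 1 (fun t => (a t : ℚ) / (k:ℚ)) with hτ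
    have hkQ : ((k:ℚ)) ≠ 0 := Nat.cast_ne_zero.2 hk.ne'
    have hkR : ((k:ℝ)) ≠ 0 := Nat.cast_ne_zero.2 hk.ne'
    have hw' : ∀ o, ∑ i, w i * ((v i o : ℚ):ℝ) = ((τ o : ℚ):ℝ) := by
      intro o
      cases o with
      | none => simpa [hv, hτ] using hwsum
      | some t =>
        have h := congrFun hwz t
        simp only [Finset.sum_apply, Pi.smul_apply, smul_eq_mul] at h
        have hz : ∀ i, z i t = ((e i t : ℕ) : ℝ) := fun i => by rw [hze i]
        simp only [hv, hτ, Option.elim]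
        push_cast
        rw [← h]
        exact Finset.sum_congr rfl (fun i _ => by rw [hz i])
    obtain ⟨u, hu⟩ := rat_descent v τ w hw'
    have husum : ∑ i, u i = 1 := by
      have h := congrFun hu none
      simpa [hv, hτ, Finset.sum_apply, smul_eq_mul] using h
    have hucoord : ∀ t, ∑ i, u i * (e i t : ℚ) = (a t : ℚ) / k := by
      intro t
      have h := congrFun hu (some t)
      simpa [hv, hτ, Finset.sum_apply, smul_eq_mul] using h
    -- uniqueness of affine combination: cast of u equals w
    have huw : (fun i => ((u i : ℝ))) = w := by
      have hsum1 : ∑ i, ((u i : ℝ)) = 1 := by exact_mod_cast husum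
      have hcomb : ∑ i, ((u i : ℝ)) • z i = ∑ i, w i • z i := by
        rw [hwz]
        funext t
        simp only [Finset.sum_apply, Pi.smul_apply, smul_eq_mul]
        have : ∑ i, ((u i : ℝ)) * z i t = (((∑ i, u i * (e i t : ℚ)) : ℚ) : ℝ) := by
          push_cast
          exact Finset.sum_congr rfl (fun i _ => by rw [hze i])
        rw [this, hucoord t]
        push_cast
        ring
      exact (affineIndependent_iff_eq_of_fintype_affineCombination_eq ℝ z).1 haff _ _ hsum1 hwsum
        (by rw [Finset.affineCombination_eq_linear_combination _ _ _ hsum1,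
                Finset.affineCombination_eq_linear_combination _ _ _ hwsum]
            exact hcomb)
    have hupos : ∀ i, 0 ≤ u i := by
      intro i
      have : ((u i : ℝ)) = w i := congrFun huw i
      have := (hwpos i).le
      rw [← congrFun huw i] at this
      exact_mod_cast this
    -- clear denominators
    set D : ℕ := ∏ i, (u i).den with hD
    have hDpos : 0 < D := Finset.prod_pos (fun i _ => (u i).pos)
    set cc : ι → ℕ := fun i => (u i).num.toNat * (k * (D / (u i).den)) with hcc
    have hccQ : ∀ i, ((cc i : ℕ) : ℚ) = u i * (k * D) := by
      intro i
      have hdvd : (u i).den ∣ D := Finset.dvd_prod_of_mem _ (Finset.mem_univ i)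
      have hdenne : (((u i).den : ℚ)) ≠ 0 := Nat.cast_ne_zero.2 (u i).den_nz
      have hnum : (((u i).num.toNat : ℕ) : ℚ) = ((u i).num : ℚ) := by
        have h0 : ((u i).num.toNat : ℤ) = (u i).num := Int.toNat_of_nonneg (Rat.num_nonneg.2 (hupos i))
        exact_mod_cast congrArg (fun z : ℤ => ((z : ℚ))) h0
      have hdiv : ((D / (u i).den : ℕ) : ℚ) = (D : ℚ) / ((u i).den : ℚ) := by
        rw [Nat.cast_div hdvd hdenne]
      have hui : (u i) = ((u i).num : ℚ) / (((u i).den : ℕ) : ℚ) := (Rat.num_div_den _).symm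
      rw [hcc]
      push_cast [hdiv]
      rw [hnum]
      conv_rhs => rw [hui]
      field_simp
    have hsumc : ∑ i, cc i = k * D := by
      have : ((∑ i, cc i : ℕ) : ℚ) = ((k * D : ℕ) : ℚ) := by
        push_cast [hccQ]
        rw [← Finset.sum_mul, husum, one_mul]
      exact_mod_cast this
    have hsume : ∑ i, cc i • e i = D • a := by
      ext t
      have hQ : ((((∑ i, cc i • e i) t : ℕ)) : ℚ) = (((D • a) t : ℕ) : ℚ) := by
        rw [Finsupp.finset_sum_apply]
        simp only [Finsupp.smul_apply, smul_eq_mul]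
        push_cast
        have : ∑ i, ((cc i : ℚ)) * ((e i t : ℚ)) = ∑ i, (u i * (k * D)) * (e i t : ℚ) :=
          Finset.sum_congr rfl (fun i _ => by rw [← hccQ i])
        rw [this]
        have : ∑ i, (u i * (k * D)) * (e i t : ℚ) = (k * D : ℚ) * ∑ i, u i * (e i t : ℚ) := by
          rw [Finset.mul_sum]
          exact Finset.sum_congr rfl (fun i _ => by ring)
        rw [this, hucoord t]
        field_simp
      exact_mod_cast hQ
    have hmemD : monomial (D • a) (1:𝕜) ∈ (I ^ k) ^ D := by
      have := monomial_prod_mem (Finset.univ) e cc (fun y _ => he y)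
      rw [hsume, hsumc, pow_mul] at this
      exact this
    refine ⟨D, hDpos, fun i => if i = D then -((monomial a (1:𝕜)) ^ D) else 0, ?_, ?_⟩
    · intro i hi
      by_cases h : i = D
      · subst h
        simp only [if_pos rfl]
        refine Submodule.neg_mem _ ?_
        rw [monomial_pow, one_pow]
        exact hmemD
      · simp only [if_neg h]
        exact Submodule.zero_mem _
    · rw [Finset.sum_eq_single_of_mem D (Finset.mem_Icc.2 ⟨hDpos, le_refl D⟩)
        (fun b _ hb => by simp [if_neg hb])]
      simp
end

section
/- Let ℐ = {I_k}_{k∈ℕ} be a graded family of monomial ideals in k[x₁,…,xₙ] (i.e., I_p · I_q ⊆ I_{p+q} for all p,q). If there exists an integer c ≥ 1 such that the Newton–Okounkov body Δ(ℐ) equals (1/c)·NP(I_c), then the limiting body ⋃_{k∈ℕ} (1/k)·NP(I_k) equals (1/c)·NP(I_c), and in particular is a polyhedron. -/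
open MvPolynomial Pointwise

section NOAux



lemma exists_between_finsets (L U : Finset ℝ) (h : ∀ l ∈ L, ∀ u ∈ U, l ≤ u) :
    ∃ t : ℝ, (∀ l ∈ L, l ≤ t) ∧ ∀ u ∈ U, t ≤ u := by
  rcases L.eq_empty_or_nonempty with rfl | hL
  · rcases U.eq_empty_or_nonempty with rfl | hU
    · exact ⟨0, by simp, by simp⟩
    · exact ⟨U.min' hU, by simp, fun u hu => U.min'_le u hu⟩
  · exact ⟨L.max' hL, fun l hl => L.le_max' l hl,
      fun u hu => h _ (L.max'_mem hL) u hu⟩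

lemma snoc_dot {m : ℕ} (a : Fin (m + 1) → ℝ) (x : Fin m → ℝ) (t : ℝ) :
    ∑ i, a i * (Fin.snoc x t : Fin (m + 1) → ℝ) i
      = (∑ i : Fin m, a i.castSucc * x i) + a (Fin.last m) * t := by
  rw [Fin.sum_univ_castSucc]; simp


def trc {m : ℕ} (h : (Fin (m + 1) → ℝ) × ℝ) : (Fin m → ℝ) × ℝ :=
  ((fun i => h.1 i.castSucc), h.2)

def cmb {m : ℕ} (pq : ((Fin (m + 1) → ℝ) × ℝ) × ((Fin (m + 1) → ℝ) × ℝ)) :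
    (Fin m → ℝ) × ℝ :=
  ((fun i => (-pq.2.1 (Fin.last m)) * pq.1.1 i.castSucc
      + pq.1.1 (Fin.last m) * pq.2.1 i.castSucc),
    (-pq.2.1 (Fin.last m)) * pq.1.2 + pq.1.1 (Fin.last m) * pq.2.2)

lemma fm {m : ℕ} {Q : Set (Fin (m + 1) → ℝ)} (hQ : IsPolyhedron Q) :
    IsPolyhedron {x : Fin m → ℝ | ∃ t : ℝ, (Fin.snoc x t : Fin (m + 1) → ℝ) ∈ Q} := by
  classical
  obtain ⟨H, rfl⟩ := hQ
  refine ⟨((H.filter fun h => h.1 (Fin.last m) = 0).image trc) ∪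
    (((H.filter fun h => 0 < h.1 (Fin.last m)) ×ˢ
        (H.filter fun h => h.1 (Fin.last m) < 0)).image cmb), ?_⟩
  have hsum : ∀ (p q : (Fin (m + 1) → ℝ) × ℝ) (x : Fin m → ℝ),
      ∑ i, (cmb (p, q)).1 i * x i
        = (-q.1 (Fin.last m)) * (∑ i : Fin m, p.1 i.castSucc * x i)
          + p.1 (Fin.last m) * (∑ i : Fin m, q.1 i.castSucc * x i) := by
    intro p q x
    rw [Finset.mul_sum, Finset.mul_sum, ← Finset.sum_add_distrib]
    exact Finset.sum_congr rfl fun i _ => by simp [cmb]; ring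
  ext x
  constructor
  · rintro ⟨t, ht⟩ h' hh'
    simp only [Set.mem_setOf_eq] at ht
    rcases Finset.mem_union.1 hh' with hh' | hh'
    · obtain ⟨h, hh, rfl⟩ := Finset.mem_image.1 hh'
      obtain ⟨hhH, hc0⟩ := Finset.mem_filter.1 hh
      have := ht h hhH
      rw [snoc_dot, hc0, zero_mul, add_zero] at this
      exact this
    · obtain ⟨pq, hpq, rfl⟩ := Finset.mem_image.1 hh'
      obtain ⟨hp, hq⟩ := Finset.mem_product.1 hpq
      obtain ⟨hpH, hcp⟩ := Finset.mem_filter.1 hp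
      obtain ⟨hqH, hcq⟩ := Finset.mem_filter.1 hq
      have h1 := ht pq.1 hpH
      have h2 := ht pq.2 hqH
      rw [snoc_dot] at h1 h2
      show (cmb pq).2 ≤ ∑ i, (cmb pq).1 i * x i
      have hs := hsum pq.1 pq.2 x
      simp only [Prod.mk.eta] at hs
      rw [hs]
      simp only [cmb]
      nlinarith [h1, h2, hcp, hcq]
  · intro hx
    simp only [Set.mem_setOf_eq] at hx
    set L : Finset ℝ := (H.filter fun h => 0 < h.1 (Fin.last m)).image
      (fun h => (h.2 - ∑ i : Fin m, h.1 i.castSucc * x i) / h.1 (Fin.last m)) with hLdef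
    set U : Finset ℝ := (H.filter fun h => h.1 (Fin.last m) < 0).image
      (fun h => (h.2 - ∑ i : Fin m, h.1 i.castSucc * x i) / h.1 (Fin.last m)) with hUdef
    have key : ∀ l ∈ L, ∀ u ∈ U, l ≤ u := by
      intro l hl u hu
      obtain ⟨p, hp, rfl⟩ := Finset.mem_image.1 hl
      obtain ⟨q, hq, rfl⟩ := Finset.mem_image.1 hu
      obtain ⟨hpH, hcp⟩ := Finset.mem_filter.1 hp
      obtain ⟨hqH, hcq⟩ := Finset.mem_filter.1 hq
      have hmem : cmb (p, q) ∈
          ((H.filter fun h => h.1 (Fin.last m) = 0).image trc) ∪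
          (((H.filter fun h => 0 < h.1 (Fin.last m)) ×ˢ
              (H.filter fun h => h.1 (Fin.last m) < 0)).image cmb) :=
        Finset.mem_union_right _ (Finset.mem_image.2 ⟨(p, q), Finset.mem_product.2 ⟨hp, hq⟩, rfl⟩)
      have hcon := hx _ hmem
      rw [hsum p q x] at hcon
      have hcon2 : (-q.1 (Fin.last m)) * p.2 + p.1 (Fin.last m) * q.2
          ≤ (-q.1 (Fin.last m)) * (∑ i : Fin m, p.1 i.castSucc * x i)
            + p.1 (Fin.last m) * (∑ i : Fin m, q.1 i.castSucc * x i) := hcon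
      set Sp := ∑ i : Fin m, p.1 i.castSucc * x i
      set Sq := ∑ i : Fin m, q.1 i.castSucc * x i
      set cp := p.1 (Fin.last m)
      set cq := q.1 (Fin.last m)
      have h2 : (p.2 - Sp) / cp * cp = p.2 - Sp := div_mul_cancel₀ _ (ne_of_gt hcp)
      have h3 : (q.2 - Sq) / cq * cq = q.2 - Sq := div_mul_cancel₀ _ (ne_of_lt hcq)
      have hpos : 0 < cp * (-cq) := mul_pos hcp (neg_pos.2 hcq)
      have hmul : (cp * (-cq)) * ((p.2 - Sp) / cp) ≤ (cp * (-cq)) * ((q.2 - Sq) / cq) := by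
        nlinarith [h2, h3, hcon2]
      exact le_of_mul_le_mul_left hmul hpos
    obtain ⟨t, htL, htU⟩ := exists_between_finsets L U key
    refine ⟨t, ?_⟩
    intro h hh
    show h.2 ≤ ∑ i, h.1 i * (Fin.snoc x t : Fin (m + 1) → ℝ) i
    rw [snoc_dot]
    rcases lt_trichotomy (h.1 (Fin.last m)) 0 with hc | hc | hc
    · have hu : (h.2 - ∑ i : Fin m, h.1 i.castSucc * x i) / h.1 (Fin.last m) ∈ U :=
        Finset.mem_image.2 ⟨h, Finset.mem_filter.2 ⟨hh, hc⟩, rfl⟩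
      have := htU _ hu
      rw [le_div_iff_of_neg hc] at this
      linarith
    · have hmem : trc h ∈
          ((H.filter fun h => h.1 (Fin.last m) = 0).image trc) ∪
          (((H.filter fun h => 0 < h.1 (Fin.last m)) ×ˢ
              (H.filter fun h => h.1 (Fin.last m) < 0)).image cmb) :=
        Finset.mem_union_left _ (Finset.mem_image.2 ⟨h, Finset.mem_filter.2 ⟨hh, hc⟩, rfl⟩)
      have h0 := hx _ hmem
      have h0' : h.2 ≤ ∑ i : Fin m, h.1 i.castSucc * x i := h0
      rw [hc, zero_mul, add_zero]
      exact h0'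
    · have hl : (h.2 - ∑ i : Fin m, h.1 i.castSucc * x i) / h.1 (Fin.last m) ∈ L :=
        Finset.mem_image.2 ⟨h, Finset.mem_filter.2 ⟨hh, hc⟩, rfl⟩
      have := htL _ hl
      rw [div_le_iff₀ hc] at this
      linarith

lemma proj {r m : ℕ} {Q : Set (Fin (m + r) → ℝ)} (hQ : IsPolyhedron Q) :
    IsPolyhedron {x : Fin m → ℝ | ∃ y : Fin r → ℝ, (Fin.append x y : Fin (m + r) → ℝ) ∈ Q} := by
  induction r with
  | zero =>
    have : {x : Fin m → ℝ | ∃ y : Fin 0 → ℝ, (Fin.append x y : Fin (m + 0) → ℝ) ∈ Q} = Q := by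
      ext x
      constructor
      · rintro ⟨y, hy⟩
        have hy' : Fin.append x y = x := by
          funext i
          have : y = Fin.elim0 := Subsingleton.elim _ _
          rw [this, Fin.append_elim0]
          rfl
        rwa [hy'] at hy
      · intro hx
        refine ⟨Fin.elim0, ?_⟩
        have hy' : (Fin.append x Fin.elim0 : Fin (m + 0) → ℝ) = x := by
          rw [Fin.append_elim0]; rfl
        rwa [hy']
    rw [this]; exact hQ
  | succ r ih =>
    have hQ' : IsPolyhedron {z : Fin (m + r) → ℝ | ∃ t : ℝ,
        (Fin.snoc z t : Fin (m + r + 1) → ℝ) ∈ Q} := fm hQ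
    have heq : {x : Fin m → ℝ | ∃ y : Fin (r + 1) → ℝ, (Fin.append x y : Fin (m + (r + 1)) → ℝ) ∈ Q}
        = {x : Fin m → ℝ | ∃ y : Fin r → ℝ, (Fin.append x y : Fin (m + r) → ℝ) ∈
            {z : Fin (m + r) → ℝ | ∃ t : ℝ, (Fin.snoc z t : Fin (m + r + 1) → ℝ) ∈ Q}} := by
      ext x
      constructor
      · rintro ⟨y, hy⟩
        refine ⟨Fin.init y, y (Fin.last r), ?_⟩
        rw [← Fin.append_snoc, Fin.snoc_init_self]
        exact hy
      · rintro ⟨y, t, ht⟩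
        refine ⟨Fin.snoc y t, ?_⟩
        rw [Fin.append_snoc]
        exact ht
    rw [heq]
    exact ih hQ'

def orth (m : ℕ) : Set (Fin m → ℝ) := {y | ∀ i, 0 ≤ y i}

lemma orth_convex {m : ℕ} : Convex ℝ (orth m) := by
  intro x hx y hy a b ha hb _
  intro i
  have : (a • x + b • y) i = a * x i + b * y i := rfl
  rw [this]
  exact add_nonneg (mul_nonneg ha (hx i)) (mul_nonneg hb (hy i))

lemma exists_finite_gens {n : ℕ} {𝕜 : Type*} [Field 𝕜] {I : Ideal (MvPolynomial (Fin n) 𝕜)}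
    (h : IsMonomialIdeal I) :
    ∃ A : Finset (Fin n →₀ ℕ), ∀ a : Fin n →₀ ℕ, (monomial a (1 : 𝕜) ∈ I ↔ ∃ s ∈ A, s ≤ a) := by
  classical
  obtain ⟨S, rfl⟩ := h
  obtain ⟨G, hG⟩ := IsNoetherian.noetherian (Ideal.span ((fun a => monomial a (1 : 𝕜)) '' S))
  have hGmem : ∀ g ∈ G, ∃ T : Finset (MvPolynomial (Fin n) 𝕜),
      ↑T ⊆ (fun a => monomial a (1 : 𝕜)) '' S ∧ g ∈ Ideal.span (T : Set (MvPolynomial (Fin n) 𝕜)) := by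
    intro g hg
    have : g ∈ Ideal.span ((fun a => monomial a (1 : 𝕜)) '' S) := by
      rw [← hG]; exact Ideal.subset_span hg
    exact Submodule.mem_span_finite_of_mem_span this
  choose T hT1 hT2 using hGmem
  set Tall : Finset (MvPolynomial (Fin n) 𝕜) := G.attach.biUnion (fun g => T g.1 g.2) with hTall
  have hTsub : (Tall : Set (MvPolynomial (Fin n) 𝕜)) ⊆ (fun a => monomial a (1 : 𝕜)) '' S := by
    intro t ht
    rw [hTall] at ht
    simp only [Finset.coe_biUnion, Set.mem_iUnion, Finset.mem_coe] at ht
    obtain ⟨g, hg, ht⟩ := ht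
    exact hT1 g.1 g.2 ht
  have hspan : Ideal.span (Tall : Set (MvPolynomial (Fin n) 𝕜))
      = Ideal.span ((fun a => monomial a (1 : 𝕜)) '' S) := by
    apply le_antisymm
    · exact Ideal.span_mono hTsub
    · rw [← hG]
      rw [Submodule.span_le]
      intro g hg
      have := hT2 g hg
      refine Ideal.span_mono ?_ this
      intro t ht
      rw [hTall]
      simp only [Finset.coe_biUnion, Set.mem_iUnion, Finset.mem_coe]
      exact ⟨⟨g, hg⟩, G.mem_attach _, ht⟩
  -- choose exponents
  have hexp : ∀ t ∈ Tall, ∃ a : Fin n →₀ ℕ, a ∈ S ∧ monomial a (1 : 𝕜) = t := by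
    intro t ht
    obtain ⟨a, haS, hat⟩ := hTsub ht
    exact ⟨a, haS, hat⟩
  choose ex hex1 hex2 using hexp
  refine ⟨Tall.attach.image (fun t => ex t.1 t.2), ?_⟩
  have himg : (fun a => monomial a (1 : 𝕜)) '' ↑(Tall.attach.image (fun t => ex t.1 t.2))
      = (Tall : Set (MvPolynomial (Fin n) 𝕜)) := by
    ext p
    simp only [Set.mem_image, Finset.coe_image, Finset.mem_coe, Finset.mem_image,
      Finset.mem_attach, true_and, Subtype.exists]
    constructor
    · rintro ⟨a, ⟨t, ht, rfl⟩, rfl⟩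
      rw [hex2 t ht]
      exact ht
    · intro hp
      exact ⟨ex p hp, ⟨p, hp, rfl⟩, hex2 p hp⟩
  intro a
  have : Ideal.span ((fun a => monomial a (1 : 𝕜)) '' S)
      = Ideal.span ((fun a => monomial a (1 : 𝕜)) ''
          ↑(Tall.attach.image (fun t => ex t.1 t.2))) := by
    rw [himg, hspan]
  rw [this, mem_ideal_span_monomial_image]
  have hsupp : (monomial a (1 : 𝕜)).support = {a} := by
    rw [support_monomial, if_neg one_ne_zero]
  rw [hsupp]
  simp only [Finset.mem_singleton, forall_eq, Finset.mem_coe]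

lemma orth_subset_hull {n : ℕ} :
    orth n ⊆ convexHull ℝ {x : Fin n → ℝ | ∃ b : Fin n →₀ ℕ, x = fun i => (b i : ℝ)} := by
  intro y hy
  classical
  set s : ℝ := ∑ i, y i with hs
  set N : ℕ := ⌈s⌉₊ + 1 with hN
  have hNpos : (0 : ℝ) < N := by positivity
  have hsN : s ≤ N := le_trans (Nat.le_ceil s) (by exact_mod_cast Nat.le_succ _)
  set w : Option (Fin n) → ℝ := fun o => o.elim (1 - s / N) (fun i => y i / N) with hw
  set z : Option (Fin n) → (Fin n → ℝ) := fun o =>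
    o.elim 0 (fun i => fun i' => ((Finsupp.single i N : Fin n →₀ ℕ) i' : ℝ)) with hz
  have hw0 : ∀ o ∈ (Finset.univ : Finset (Option (Fin n))), 0 ≤ w o := by
    rintro (_ | i) _
    · simp only [hw, Option.elim]
      rw [sub_nonneg, div_le_one hNpos]
      exact hsN
    · exact div_nonneg (hy i) hNpos.le
  have hw1 : ∑ o : Option (Fin n), w o = 1 := by
    rw [Fintype.sum_option]
    simp only [hw, Option.elim]
    rw [← Finset.sum_div]
    rw [← hs]
    field_simp
    ring
  have hzmem : ∀ o ∈ (Finset.univ : Finset (Option (Fin n))),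
      z o ∈ {x : Fin n → ℝ | ∃ b : Fin n →₀ ℕ, x = fun i => (b i : ℝ)} := by
    rintro (_ | i) _
    · exact ⟨0, by funext i; simp [hz]⟩
    · exact ⟨Finsupp.single i N, rfl⟩
  have hmem := Finset.centerMass_mem_convexHull (Finset.univ : Finset (Option (Fin n)))
    hw0 (by rw [hw1]; norm_num) hzmem
  have hcm : (Finset.univ : Finset (Option (Fin n))).centerMass w z = y := by
    rw [Finset.centerMass_eq_of_sum_1 _ _ hw1]
    rw [Fintype.sum_option]
    simp only [hw, hz, Option.elim, smul_zero, zero_add]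
    funext i'
    simp only [Finset.sum_apply, Pi.smul_apply, smul_eq_mul]
    have : ∀ i : Fin n, y i / N * ((Finsupp.single i N : Fin n →₀ ℕ) i' : ℝ)
        = if i = i' then y i / N * N else 0 := by
      intro i
      rw [Finsupp.single_apply]
      split_ifs <;> simp
    rw [Finset.sum_congr rfl fun i _ => this i]
    rw [Finset.sum_ite_eq' Finset.univ i' (fun i => y i / N * N)]
    simp only [Finset.mem_univ, if_true]
    field_simp
  rwa [hcm] at hmem

lemma NP_repr {n : ℕ} {𝕜 : Type*} [Field 𝕜] {I : Ideal (MvPolynomial (Fin n) 𝕜)}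
    (h : IsMonomialIdeal I) :
    ∃ (r : ℕ) (v : Fin r → (Fin n → ℝ)),
      NP I = convexHull ℝ (Set.range v) + orth n := by
  classical
  obtain ⟨A, hA⟩ := exists_finite_gens h
  set cst : (Fin n →₀ ℕ) → (Fin n → ℝ) := fun a => fun i => (a i : ℝ) with hcst
  set e := A.equivFin with he
  refine ⟨A.card, fun j => cst (e.symm j : Fin n →₀ ℕ), ?_⟩
  have hrange : Set.range (fun j => cst (e.symm j : Fin n →₀ ℕ)) = cst '' ↑A := by
    ext x
    constructor
    · rintro ⟨j, rfl⟩
      exact ⟨(e.symm j : Fin n →₀ ℕ), (e.symm j).2, rfl⟩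
    · rintro ⟨a, ha, rfl⟩
      exact ⟨e ⟨a, ha⟩, by simp⟩
  rw [hrange]
  have hD : {x : Fin n → ℝ | ∃ a : Fin n →₀ ℕ, monomial a (1 : 𝕜) ∈ I ∧ x = fun i => (a i : ℝ)}
      = {x | ∃ a : Fin n →₀ ℕ, (∃ s ∈ A, s ≤ a) ∧ x = cst a} := by
    ext x
    simp only [Set.mem_setOf_eq, hA]
    exact Iff.rfl
  rw [NP, hD]
  apply le_antisymm
  · apply convexHull_min
    · rintro x ⟨a, ⟨s, hs, hsa⟩, rfl⟩
      refine ⟨cst s, subset_convexHull ℝ _ ⟨s, hs, rfl⟩, cst a - cst s, ?_, by ring⟩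
      intro i
      simp only [Pi.sub_apply, hcst, sub_nonneg]
      exact_mod_cast hsa i
    · exact Convex.add (convex_convexHull ℝ _) orth_convex
  · have hstep : cst '' ↑A + orth n ⊆
        convexHull ℝ {x | ∃ a : Fin n →₀ ℕ, (∃ s ∈ A, s ≤ a) ∧ x = cst a} := by
      rintro x ⟨p, ⟨s, hs, rfl⟩, y, hyo, rfl⟩
      have hy' : y ∈ convexHull ℝ {x : Fin n → ℝ | ∃ b : Fin n →₀ ℕ, x = fun i => (b i : ℝ)} :=
        orth_subset_hull hyo
      have : cst s + y ∈ {cst s} + convexHull ℝ {x : Fin n → ℝ | ∃ b : Fin n →₀ ℕ, x = cst b} :=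
        ⟨cst s, rfl, y, hy', rfl⟩
      have h2 : ({cst s} : Set (Fin n → ℝ)) + convexHull ℝ {x : Fin n → ℝ | ∃ b, x = cst b}
          = convexHull ℝ (({cst s} : Set (Fin n → ℝ)) + {x | ∃ b, x = cst b}) := by
        rw [convexHull_add, convexHull_singleton]
      rw [h2] at this
      refine convexHull_mono ?_ this
      rintro u ⟨p', hp', q, ⟨b, rfl⟩, rfl⟩
      rw [Set.mem_singleton_iff] at hp'
      subst hp'
      refine ⟨s + b, ⟨s, hs, le_add_of_nonneg_right zero_le⟩, ?_⟩
      funext i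
      simp [hcst]
    calc convexHull ℝ (cst '' ↑A) + orth n
        = convexHull ℝ (cst '' ↑A) + convexHull ℝ (orth n) := by
          rw [Convex.convexHull_eq orth_convex]
      _ = convexHull ℝ (cst '' ↑A + orth n) := (convexHull_add _ _).symm
      _ ≤ convexHull ℝ (convexHull ℝ {x | ∃ a : Fin n →₀ ℕ, (∃ s ∈ A, s ≤ a) ∧ x = cst a}) :=
          convexHull_mono hstep
      _ = convexHull ℝ {x | ∃ a : Fin n →₀ ℕ, (∃ s ∈ A, s ≤ a) ∧ x = cst a} :=
          Convex.convexHull_eq (convex_convexHull ℝ _)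


lemma simplex_repr {r m : ℕ} (v : Fin r → (Fin m → ℝ)) (x : Fin m → ℝ) :
    x ∈ convexHull ℝ (Set.range v) ↔
      ∃ l : Fin r → ℝ, (∀ j, 0 ≤ l j) ∧ (∑ j, l j) = 1 ∧ x = ∑ j, l j • v j := by
  constructor
  · intro hx
    rw [convexHull_range_eq_exists_affineCombination] at hx
    obtain ⟨s, w, hw0, hw1, hx⟩ := hx
    classical
    refine ⟨fun j => if j ∈ s then w j else 0,
      fun j => by simp only []; split_ifs with hj; exacts [hw0 j hj, le_rfl], ?_, ?_⟩
    · rw [Finset.sum_ite_mem, Finset.univ_inter, hw1]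
    · rw [← hx, affineCombination_eq_centerMass hw1, Finset.centerMass_eq_of_sum_1 _ _ hw1]
      symm
      calc ∑ j : Fin r, (if j ∈ s then w j else 0) • v j
          = ∑ j : Fin r, (if j ∈ s then w j • v j else 0) :=
            Finset.sum_congr rfl fun j _ => by split_ifs <;> simp
        _ = ∑ j ∈ Finset.univ ∩ s, w j • v j := Finset.sum_ite_mem _ _ _
        _ = ∑ j ∈ s, w j • v j := by rw [Finset.univ_inter]
  · rintro ⟨l, hl0, hl1, rfl⟩
    have := Finset.centerMass_mem_convexHull (Finset.univ : Finset (Fin r))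
      (fun j _ => hl0 j) (by rw [hl1]; norm_num) (fun j _ => Set.mem_range_self (f := v) j)
    rwa [Finset.centerMass_eq_of_sum_1 _ _ hl1] at this

lemma dot_append {m r : ℕ} (a : Fin m → ℝ) (b : Fin r → ℝ) (x : Fin m → ℝ) (y : Fin r → ℝ) :
    ∑ k, (Fin.append a b : Fin (m + r) → ℝ) k * (Fin.append x y : Fin (m + r) → ℝ) k
      = (∑ i, a i * x i) + ∑ j, b j * y j := by
  rw [Fin.sum_univ_add]
  simp [Fin.append_left, Fin.append_right]

lemma hull_orth_poly {m r : ℕ} (v : Fin r → (Fin m → ℝ)) :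
    IsPolyhedron (convexHull ℝ (Set.range v) + orth m) := by
  classical
  set H : Finset ((Fin (m + r) → ℝ) × ℝ) :=
    (Finset.univ.image fun j : Fin r =>
        ((Fin.append (0 : Fin m → ℝ) (Pi.single j (1 : ℝ)) : Fin (m + r) → ℝ), (0 : ℝ)))
    ∪ {((Fin.append (0 : Fin m → ℝ) (fun _ => (1 : ℝ)) : Fin (m + r) → ℝ), (1 : ℝ)),
       ((Fin.append (0 : Fin m → ℝ) (fun _ => (-1 : ℝ)) : Fin (m + r) → ℝ), (-1 : ℝ))}
    ∪ (Finset.univ.image fun i : Fin m =>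
        ((Fin.append (Pi.single i (1 : ℝ)) (fun j => -(v j i)) : Fin (m + r) → ℝ), (0 : ℝ)))
    with hHdef
  have hQ : IsPolyhedron {z : Fin (m + r) → ℝ | ∀ h ∈ H, h.2 ≤ ∑ k, h.1 k * z k} := ⟨H, rfl⟩
  have hproj := proj hQ
  have heq : {x : Fin m → ℝ | ∃ y : Fin r → ℝ, (Fin.append x y : Fin (m + r) → ℝ) ∈
      {z : Fin (m + r) → ℝ | ∀ h ∈ H, h.2 ≤ ∑ k, h.1 k * z k}}
      = convexHull ℝ (Set.range v) + orth m := by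
    ext x
    simp only [Set.mem_setOf_eq]
    constructor
    · rintro ⟨y, hy⟩
      have hy1 : ∀ j : Fin r, 0 ≤ y j := by
        intro j
        have hmem : ((Fin.append (0 : Fin m → ℝ) (Pi.single j (1 : ℝ)) : Fin (m + r) → ℝ),
            (0 : ℝ)) ∈ H := by
          rw [hHdef]
          exact Finset.mem_union_left _ (Finset.mem_union_left _
            (Finset.mem_image.2 ⟨j, Finset.mem_univ j, rfl⟩))
        have := hy _ hmem
        rw [dot_append] at this
        simpa [Pi.single_apply] using this
      have hy2 : (∑ j, y j) = 1 := by
        have hmem1 : ((Fin.append (0 : Fin m → ℝ) (fun _ => (1 : ℝ)) : Fin (m + r) → ℝ),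
            (1 : ℝ)) ∈ H := by
          rw [hHdef]
          exact Finset.mem_union_left _ (Finset.mem_union_right _ (by simp))
        have hmem2 : ((Fin.append (0 : Fin m → ℝ) (fun _ => (-1 : ℝ)) : Fin (m + r) → ℝ),
            (-1 : ℝ)) ∈ H := by
          rw [hHdef]
          exact Finset.mem_union_left _ (Finset.mem_union_right _ (by simp))
        have h1 := hy _ hmem1
        have h2 := hy _ hmem2
        rw [dot_append] at h1 h2
        simp only [Pi.zero_apply, zero_mul, Finset.sum_const_zero, zero_add, one_mul,
          neg_mul, neg_one_mul] at h1 h2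
        have h2' : ∑ x : Fin r, -y x = -∑ x : Fin r, y x := by
          simp [Finset.sum_neg_distrib]
        rw [h2'] at h2
        linarith [h1, h2]
      have hy3 : ∀ i : Fin m, 0 ≤ x i - ∑ j, y j * v j i := by
        intro i
        have hmem : ((Fin.append (Pi.single i (1 : ℝ)) (fun j => -(v j i)) : Fin (m + r) → ℝ),
            (0 : ℝ)) ∈ H := by
          rw [hHdef]
          exact Finset.mem_union_right _ (Finset.mem_image.2 ⟨i, Finset.mem_univ i, rfl⟩)
        have := hy _ hmem
        rw [dot_append] at this
        simp only [Pi.single_apply, ite_mul, one_mul, zero_mul, Finset.sum_ite_eq,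
          Finset.sum_ite_eq', Finset.mem_univ, if_true, neg_mul,
          Finset.sum_neg_distrib] at this
        have hcomm : ∑ j : Fin r, y j * v j i = ∑ j : Fin r, v j i * y j :=
          Finset.sum_congr rfl fun j _ => mul_comm _ _
        rw [hcomm]
        linarith [this]
      refine ⟨∑ j, y j • v j, ?_, x - ∑ j, y j • v j, ?_, by ring⟩
      · exact (simplex_repr v _).2 ⟨y, hy1, hy2, rfl⟩
      · intro i
        have := hy3 i
        simpa [Finset.sum_apply] using this
    · rintro ⟨p, hp, w, hw, rfl⟩
      obtain ⟨l, hl0, hl1, rfl⟩ := (simplex_repr v p).1 hp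
      refine ⟨l, ?_⟩
      intro h hh
      rw [hHdef] at hh
      rcases Finset.mem_union.1 hh with hh | hh
      · rcases Finset.mem_union.1 hh with hh | hh
        · obtain ⟨j, _, rfl⟩ := Finset.mem_image.1 hh
          rw [dot_append]
          simpa [Pi.single_apply] using hl0 j
        · simp only [Finset.mem_insert, Finset.mem_singleton] at hh
          rcases hh with rfl | rfl <;>
          · rw [dot_append]
            simp [hl1, Finset.sum_neg_distrib]
      · obtain ⟨i, _, rfl⟩ := Finset.mem_image.1 hh
        rw [dot_append]
        simp only [Pi.single_apply, ite_mul, one_mul, zero_mul, Finset.sum_ite_eq,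
          Finset.sum_ite_eq', Finset.mem_univ, if_true, neg_mul, Finset.sum_neg_distrib]
        have := hw i
        simp only [Pi.add_apply, Finset.sum_apply, Pi.smul_apply, smul_eq_mul] at this ⊢
        have hcomm : ∑ j : Fin r, l j * v j i = ∑ j : Fin r, v j i * l j :=
          Finset.sum_congr rfl fun j _ => mul_comm _ _
        rw [hcomm] at *
        linarith [this]
  rw [← heq]
  exact hproj


lemma poly_smul {n : ℕ} {P : Set (Fin n → ℝ)} (hP : IsPolyhedron P) {s : ℝ} (hs : 0 < s) :
    IsPolyhedron (s • P) := by
  classical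
  obtain ⟨H, rfl⟩ := hP
  refine ⟨H.image (fun h => (h.1, s * h.2)), ?_⟩
  ext x
  constructor
  · intro hx h' hh'
    obtain ⟨h, hh, rfl⟩ := Finset.mem_image.1 hh'
    rw [Set.mem_smul_set] at hx
    obtain ⟨p, hp, rfl⟩ := hx
    have hle := hp h hh
    have hsum : ∑ i, h.1 i * (s • p) i = s * ∑ i, h.1 i * p i := by
      rw [Finset.mul_sum]
      exact Finset.sum_congr rfl fun i _ => by simp only [Pi.smul_apply, smul_eq_mul]; ring
    show s * h.2 ≤ ∑ i, h.1 i * (s • p) i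
    rw [hsum]
    exact mul_le_mul_of_nonneg_left hle hs.le
  · intro hx
    rw [Set.mem_smul_set]
    refine ⟨s⁻¹ • x, ?_, smul_inv_smul₀ hs.ne' x⟩
    intro h hh
    have hle := hx (h.1, s * h.2) (Finset.mem_image.2 ⟨h, hh, rfl⟩)
    simp only at hle
    have hsum : ∑ i, h.1 i * (s⁻¹ • x) i = s⁻¹ * ∑ i, h.1 i * x i := by
      rw [Finset.mul_sum]
      exact Finset.sum_congr rfl fun i _ => by simp only [Pi.smul_apply, smul_eq_mul]; ring
    show h.2 ≤ ∑ i, h.1 i * (s⁻¹ • x) i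
    rw [hsum]
    have h2 : h.2 = s⁻¹ * (s * h.2) := by field_simp
    rw [h2]
    exact mul_le_mul_of_nonneg_left hle (inv_nonneg.2 hs.le)

end NOAux

theorem stmt1 {n : ℕ} {𝕜 : Type*} [Field 𝕜] (F : ℕ → Ideal (MvPolynomial (Fin n) 𝕜))
    (hmon : ∀ k, IsMonomialIdeal (F k)) (hgr : ∀ p q, F p * F q ≤ F (p + q))
    (c : ℕ) (hc : 1 ≤ c) (h : NObody F = ((c : ℝ)⁻¹) • NP (F c)) :
    limitBody F = ((c : ℝ)⁻¹) • NP (F c) ∧ IsPolyhedron (limitBody F) := by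
  classical
  have hcR : (0 : ℝ) < (c : ℝ) := by exact_mod_cast Nat.lt_of_lt_of_le Nat.zero_lt_one hc
  have hcinv : (0 : ℝ) < ((c : ℝ))⁻¹ := inv_pos.2 hcR
  have hconv : Convex ℝ (NObody F) := by
    rw [h]
    exact (convex_convexHull ℝ _).smul _
  have hsub : limitBody F ⊆ NObody F := by
    intro x hx
    simp only [limitBody, Set.mem_iUnion] at hx
    obtain ⟨k, hk, hx⟩ := hx
    have hkey : ((k : ℝ)⁻¹) • NP (F k) ⊆ NObody F := by
      rw [NP, ← convexHull_smul]
      apply convexHull_min ?_ hconv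
      intro z hz
      rw [Set.mem_smul_set] at hz
      obtain ⟨d, ⟨a, hma, rfl⟩, rfl⟩ := hz
      apply subset_closure
      refine Set.mem_iUnion.2 ⟨k, hk, a, hma, ?_⟩
      funext i
      show (k : ℝ)⁻¹ * (a i : ℝ) = (a i : ℝ) / k
      rw [inv_mul_eq_div]
    exact hkey hx
  have heq : limitBody F = ((c : ℝ)⁻¹) • NP (F c) := by
    apply le_antisymm
    · rw [← h]
      exact hsub
    · intro x hx
      simp only [limitBody, Set.mem_iUnion]
      exact ⟨c, hc, hx⟩
  refine ⟨heq, ?_⟩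
  rw [heq]
  obtain ⟨r, v, hrepr⟩ := NP_repr (hmon c)
  apply poly_smul _ hcinv
  rw [hrepr]
  exact hull_orth_poly v
end

section
/- Let ℐ = {I_k}_{k∈ℕ} be a graded family of monomial ideals. If the union P = ⋃_{k∈ℕ} (1/k)·NP(I_k) is a polyhedron, then there exists an integer c ≥ 1 such that P = (1/c)·NP(I_c), and consequently Δ(ℐ) = (1/c)·NP(I_c). -/
open MvPolynomial Pointwise

namespace Stmt2Aux

variable {n : ℕ} {𝕜 : Type*} [Field 𝕜]

/-- exponent vector as a real vector -/
noncomputable def ev (a : Fin n →₀ ℕ) : Fin n → ℝ := fun i => (a i : ℝ)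

/-- nonneg orthant -/
def Quad (n : ℕ) : Set (Fin n → ℝ) := {x | ∀ i, 0 ≤ x i}

lemma quad_convex : Convex ℝ (Quad n) := by
  intro x hx y hy a b ha hb _
  intro i
  have := hx i; have := hy i
  simp only [Pi.add_apply, Pi.smul_apply, smul_eq_mul]
  nlinarith

/-- the point set generating NP -/
def Spts (I : Ideal (MvPolynomial (Fin n) 𝕜)) : Set (Fin n → ℝ) :=
  {x | ∃ a : Fin n →₀ ℕ, monomial a (1 : 𝕜) ∈ I ∧ x = fun i => (a i : ℝ)}

lemma NP_eq (I : Ideal (MvPolynomial (Fin n) 𝕜)) : NP I = convexHull ℝ (Spts I) := rfl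

lemma mem_spts {I : Ideal (MvPolynomial (Fin n) 𝕜)} {a : Fin n →₀ ℕ}
    (ha : monomial a (1 : 𝕜) ∈ I) : ev a ∈ Spts I :=
  ⟨a, ha, rfl⟩

lemma spts_subset_quad (I : Ideal (MvPolynomial (Fin n) 𝕜)) : Spts I ⊆ Quad n := by
  rintro x ⟨a, -, rfl⟩ i
  positivity

lemma NP_subset_quad (I : Ideal (MvPolynomial (Fin n) 𝕜)) : NP I ⊆ Quad n :=
  convexHull_min (spts_subset_quad I) quad_convex

lemma quad_smul {r : ℝ} (hr : 0 ≤ r) {x : Fin n → ℝ} (hx : x ∈ Quad n) : r • x ∈ Quad n := by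
  intro i
  have := hx i
  simp only [Pi.smul_apply, smul_eq_mul]
  positivity

lemma mon_mem_add_left {I : Ideal (MvPolynomial (Fin n) 𝕜)} {a : Fin n →₀ ℕ}
    (ha : monomial a (1 : 𝕜) ∈ I) (b : Fin n →₀ ℕ) : monomial (b + a) (1 : 𝕜) ∈ I := by
  have h := I.mul_mem_left (monomial b (1 : 𝕜)) ha
  rwa [monomial_mul, one_mul] at h

section Family
variable (F : ℕ → Ideal (MvPolynomial (Fin n) 𝕜))

lemma mon_mem_mul (hgr : ∀ p q, F p * F q ≤ F (p + q)) {p q : ℕ} {a b : Fin n →₀ ℕ}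
    (ha : monomial a (1 : 𝕜) ∈ F p) (hb : monomial b (1 : 𝕜) ∈ F q) :
    monomial (a + b) (1 : 𝕜) ∈ F (p + q) := by
  have h := hgr p q (Ideal.mul_mem_mul ha hb)
  rwa [monomial_mul, one_mul] at h

lemma mon_mem_nsmul (hgr : ∀ p q, F p * F q ≤ F (p + q)) {k : ℕ} {a : Fin n →₀ ℕ}
    (ha : monomial a (1 : 𝕜) ∈ F k) : ∀ m : ℕ, 0 < m → monomial (m • a) (1 : 𝕜) ∈ F (m * k) := by
  intro m hm
  induction m with
  | zero => omega
  | succ m ih =>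
    rcases Nat.eq_zero_or_pos m with hm0 | hm0
    · subst hm0; simpa using ha
    · have h := mon_mem_mul F hgr (ih hm0) ha
      rw [succ_nsmul, Nat.succ_mul]
      exact h

lemma mon_mem_sum (hgr : ∀ p q, F p * F q ≤ F (p + q)) {k : ℕ} {ι : Type*}
    (t : Finset ι) (p : ι → ℕ) (A : ι → (Fin n →₀ ℕ))
    (hA : ∀ j ∈ t, monomial (A j) (1 : 𝕜) ∈ F k) (hp : 0 < ∑ j ∈ t, p j) :
    monomial (∑ j ∈ t, p j • A j) (1 : 𝕜) ∈ F (k * ∑ j ∈ t, p j) := by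
  classical
  induction t using Finset.induction_on with
  | empty => simp at hp
  | insert j t hj ih =>
    rw [Finset.sum_insert hj] at hp ⊢
    rw [Finset.sum_insert hj]
    have hAj : ∀ l ∈ t, monomial (A l) (1 : 𝕜) ∈ F k := fun l hl => hA l (Finset.mem_insert_of_mem hl)
    rcases Nat.eq_zero_or_pos (∑ l ∈ t, p l) with h0 | h0
    · have hall : ∀ l ∈ t, p l = 0 := by
        intro l hl; exact (Finset.sum_eq_zero_iff.mp h0) l hl
      have hz : (∑ l ∈ t, p l • A l) = 0 := Finset.sum_eq_zero fun l hl => by rw [hall l hl, zero_smul]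
      have hpj : 0 < p j := by omega
      rw [hz, add_zero, h0, add_zero, Nat.mul_comm]
      exact mon_mem_nsmul F hgr (hA j (Finset.mem_insert_self j t)) _ hpj
    · rcases Nat.eq_zero_or_pos (p j) with hpj | hpj
      · rw [hpj, zero_smul, zero_add, zero_add]
        exact ih hAj h0
      · have h1 := mon_mem_nsmul F hgr (hA j (Finset.mem_insert_self j t)) _ hpj
        have h2 := ih hAj h0
        have h := mon_mem_mul F hgr h1 h2
        rw [Nat.mul_add, Nat.mul_comm k (p j)]
        exact h
end Family

lemma ev_add (a b : Fin n →₀ ℕ) : ev (a + b) = ev a + ev b := by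
  funext i; simp [ev]

lemma ev_nsmul (m : ℕ) (a : Fin n →₀ ℕ) : ev (m • a) = (m : ℝ) • ev a := by
  funext i; simp [ev]

/-- adding `t ≥ 0` in coordinate `i` stays in the Newton polyhedron -/
lemma hull_single_step {I : Ideal (MvPolynomial (Fin n) 𝕜)} {y : Fin n → ℝ}
    (hy : y ∈ convexHull ℝ (Spts I)) (i : Fin n) {t : ℝ} (ht : 0 ≤ t) :
    y + Pi.single i t ∈ convexHull ℝ (Spts I) := by
  classical
  rw [convexHull_eq] at hy
  obtain ⟨ι, tF, w, z, hw0, hw1, hz, hcm⟩ := hy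
  rw [Finset.centerMass_eq_of_sum_1 _ _ hw1] at hcm
  -- choose a big natural number N ≥ t
  obtain ⟨N, hN⟩ := exists_nat_gt t
  have hN0 : (0 : ℝ) < N := lt_of_le_of_lt ht hN
  have hNne : (N : ℝ) ≠ 0 := ne_of_gt hN0
  -- each translated vertex is in the hull
  have key : ∀ j ∈ tF, z j + Pi.single i t ∈ convexHull ℝ (Spts I) := by
    intro j hj
    obtain ⟨a, ha, hza⟩ := hz j hj
    have hza' : z j = ev a := hza
    have ha' : monomial (a + N • Finsupp.single i 1) (1 : 𝕜) ∈ I := by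
      have := mon_mem_add_left ha (N • Finsupp.single i 1)
      rwa [add_comm] at this
    have hev : ev (a + N • Finsupp.single i 1) = ev a + Pi.single i (N : ℝ) := by
      rw [ev_add, ev_nsmul]
      congr 1
      funext l
      simp only [ev, Pi.smul_apply, smul_eq_mul, Finsupp.single_apply, Pi.single_apply]
      by_cases h : i = l
      · subst h; simp
      · simp [h, Ne.symm h]
    have h1 : ev a ∈ convexHull ℝ (Spts I) := subset_convexHull ℝ _ (mem_spts ha)
    have h2 : ev a + Pi.single i (N : ℝ) ∈ convexHull ℝ (Spts I) := by
      rw [← hev]; exact subset_convexHull ℝ _ (mem_spts ha')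
    have hcomb := (convex_convexHull ℝ (Spts I)) h1 h2
      (a := 1 - t / N) (b := t / N) (by
        have : t / N ≤ 1 := by
          rw [div_le_one hN0]; exact le_of_lt hN
        linarith) (by positivity) (by ring)
    have : (1 - t / N) • ev a + (t / N) • (ev a + Pi.single i (N : ℝ))
        = ev a + Pi.single i t := by
      have hsm : (t / N) • (Pi.single i (N : ℝ) : Fin n → ℝ) = (Pi.single i t : Fin n → ℝ) := by
        funext l
        by_cases h : l = i
        · subst h; simp [div_mul_cancel₀ _ hNne]
        · simp [Pi.single_apply, h]
      rw [smul_add, hsm]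
      module
    rw [this] at hcomb
    rw [hza']
    exact hcomb
  -- now take the convex combination
  have : y + Pi.single i t = ∑ j ∈ tF, w j • (z j + Pi.single i t) := by
    rw [← hcm]
    rw [Finset.sum_congr rfl (fun j _ => smul_add (w j) (z j) (Pi.single i t))]
    rw [Finset.sum_add_distrib, ← Finset.sum_smul, hw1, one_smul]
  rw [this]
  exact (convex_convexHull ℝ (Spts I)).sum_mem hw0 hw1 key

/-- the Newton polyhedron absorbs the nonnegative orthant -/
lemma hull_add_quad {I : Ideal (MvPolynomial (Fin n) 𝕜)} {y r : Fin n → ℝ}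
    (hy : y ∈ convexHull ℝ (Spts I)) (hr : r ∈ Quad n) :
    y + r ∈ convexHull ℝ (Spts I) := by
  classical
  have main : ∀ s : Finset (Fin n), y + ∑ i ∈ s, Pi.single i (r i) ∈ convexHull ℝ (Spts I) := by
    intro s
    induction s using Finset.induction_on with
    | empty => simpa using hy
    | insert j s hj ih =>
      have hre : y + ∑ i ∈ insert j s, Pi.single i (r i)
          = (y + ∑ i ∈ s, Pi.single i (r i)) + Pi.single j (r j) := by
        rw [Finset.sum_insert hj]; abel
      rw [hre]
      exact hull_single_step ih j (hr j)
  have hre : r = ∑ i, Pi.single i (r i) := by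
    funext j
    rw [Finset.sum_apply]
    rw [Finset.sum_congr rfl (fun i _ => Pi.single_apply i (r i) j)]
    simp
  rw [hre] at *
  exact main Finset.univ

section CBsec
variable (F : ℕ → Ideal (MvPolynomial (Fin n) 𝕜))

/-- the scaled Newton polyhedron -/
def CB (k : ℕ) : Set (Fin n → ℝ) := ((k : ℝ)⁻¹) • NP (F k)

lemma CB_subset_limit {k : ℕ} (hk : 0 < k) : CB F k ⊆ limitBody F := by
  intro x hx
  exact Set.mem_iUnion.2 ⟨k, Set.mem_iUnion.2 ⟨hk, hx⟩⟩

lemma limit_eq_union : limitBody F = ⋃ k : ℕ, ⋃ (_ : 0 < k), CB F k := rfl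

lemma CB_convex (k : ℕ) : Convex ℝ (CB F k) :=
  (convex_convexHull ℝ (Spts (F k))).smul _

lemma CB_subset_quad {k : ℕ} : CB F k ⊆ Quad n := by
  rintro x ⟨y, hy, rfl⟩
  exact quad_smul (by positivity) (NP_subset_quad (F k) hy)

lemma limit_subset_quad : limitBody F ⊆ Quad n := by
  intro x hx
  obtain ⟨k, hk, hx⟩ := Set.mem_iUnion₂.1 (by rwa [limit_eq_union] at hx)
  exact CB_subset_quad F hx

lemma CB_add_quad {k : ℕ} (hk : 0 < k) {x r : Fin n → ℝ} (hx : x ∈ CB F k)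
    (hr : r ∈ Quad n) : x + r ∈ CB F k := by
  obtain ⟨y, hy, rfl⟩ := hx
  have hkne : (k : ℝ) ≠ 0 := Nat.cast_ne_zero.2 hk.ne'
  refine ⟨y + (k : ℝ) • r, hull_add_quad hy (quad_smul (by positivity) hr), ?_⟩
  show (k : ℝ)⁻¹ • (y + (k : ℝ) • r) = (k : ℝ)⁻¹ • y + r
  rw [smul_add, smul_smul, inv_mul_cancel₀ hkne, one_smul]

lemma limit_add_quad {x r : Fin n → ℝ} (hx : x ∈ limitBody F) (hr : r ∈ Quad n) :
    x + r ∈ limitBody F := by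
  obtain ⟨k, hk, hx⟩ := Set.mem_iUnion₂.1 (by rwa [limit_eq_union] at hx)
  exact CB_subset_limit F hk (CB_add_quad F hk hx hr)

lemma CB_mono (hgr : ∀ p q, F p * F q ≤ F (p + q)) {k m : ℕ} (hk : 0 < k) (hm : 0 < m) :
    CB F k ⊆ CB F (k * m) := by
  rintro x ⟨y, hy, rfl⟩
  have hkne : (k : ℝ) ≠ 0 := Nat.cast_ne_zero.2 hk.ne'
  have hmne : (m : ℝ) ≠ 0 := Nat.cast_ne_zero.2 hm.ne'
  refine ⟨(m : ℝ) • y, ?_, ?_⟩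
  · have h1 : (m : ℝ) • y ∈ (m : ℝ) • convexHull ℝ (Spts (F k)) := Set.smul_mem_smul_set hy
    rw [← convexHull_smul] at h1
    refine convexHull_mono ?_ h1
    rintro _ ⟨u, ⟨a, ha, rfl⟩, rfl⟩
    have : monomial (m • a) (1 : 𝕜) ∈ F (k * m) := by
      rw [Nat.mul_comm]
      exact mon_mem_nsmul F hgr ha m hm
    have hev : (m : ℝ) • (fun i => ((a i : ℝ))) = ev (m • a) := by
      rw [ev_nsmul]; rfl
    show ((m : ℝ) • fun i => ((a i : ℝ))) ∈ Spts (F (k * m))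
    rw [hev]
    exact mem_spts this
  · show ((k * m : ℕ) : ℝ)⁻¹ • ((m : ℝ) • y) = (k : ℝ)⁻¹ • y
    rw [smul_smul]
    congr 1
    push_cast
    field_simp

end CBsec
section Poly

/-- linear functional -/
def lf (a x : Fin n → ℝ) : ℝ := ∑ i, a i * x i

lemma lf_add_smul (a x z : Fin n → ℝ) (c : ℝ) : lf a (x + c • z) = lf a x + c * lf a z := by
  unfold lf
  rw [Finset.mul_sum, ← Finset.sum_add_distrib]
  refine Finset.sum_congr rfl fun i _ => ?_
  simp only [Pi.add_apply, Pi.smul_apply, smul_eq_mul]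
  ring

lemma lf_sub (a x y : Fin n → ℝ) : lf a (x - y) = lf a x - lf a y := by
  unfold lf
  rw [← Finset.sum_sub_distrib]
  refine Finset.sum_congr rfl fun i _ => ?_
  simp only [Pi.sub_apply]
  ring

lemma lf_single (a : Fin n → ℝ) (i : Fin n) : lf a (Pi.single i 1) = a i := by
  unfold lf
  have h : ∀ j ∈ Finset.univ, a j * (Pi.single i (1:ℝ) : Fin n → ℝ) j
      = if j = i then a j else 0 := by
    intro j _
    by_cases h : j = i
    · subst h; simp
    · simp [Pi.single_apply, h]
  rw [Finset.sum_congr rfl h, Finset.sum_ite_eq' Finset.univ i a]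
  simp

lemma lf_single' (x : Fin n → ℝ) (i : Fin n) : lf (Pi.single i 1) x = x i := by
  unfold lf
  have h : ∀ j ∈ Finset.univ, (Pi.single i (1:ℝ) : Fin n → ℝ) j * x j
      = if j = i then x j else 0 := by
    intro j _
    by_cases h : j = i
    · subst h; simp
    · simp [Pi.single_apply, h]
  rw [Finset.sum_congr rfl h, Finset.sum_ite_eq' Finset.univ i x]
  simp

lemma lf_neg (a x : Fin n → ℝ) : lf (-a) x = -lf a x := by
  unfold lf
  rw [← Finset.sum_neg_distrib]
  exact Finset.sum_congr rfl fun i _ => by simp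

/-- the polyhedron cut out by `H` -/
def Pset (H : Finset ((Fin n → ℝ) × ℝ)) : Set (Fin n → ℝ) :=
  {x | ∀ h ∈ H, h.2 ≤ ∑ i, h.1 i * x i}

lemma mem_Pset {H : Finset ((Fin n → ℝ) × ℝ)} {x : Fin n → ℝ} :
    x ∈ Pset H ↔ ∀ h ∈ H, h.2 ≤ lf h.1 x := Iff.rfl

lemma Pset_closed (H : Finset ((Fin n → ℝ) × ℝ)) : IsClosed (Pset H) := by
  have : Pset H = ⋂ h ∈ H, {x : Fin n → ℝ | h.2 ≤ lf h.1 x} := by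
    ext x; simp [Pset, lf, Set.mem_iInter]
  rw [this]
  refine isClosed_biInter fun h _ => isClosed_le continuous_const ?_
  exact continuous_finset_sum _ fun i _ => continuous_const.mul (continuous_apply i)

lemma Pset_convex (H : Finset ((Fin n → ℝ) × ℝ)) : Convex ℝ (Pset H) := by
  intro x hx y hy a b ha hb hab
  intro h hh
  have h1 := hx h hh
  have h2 := hy h hh
  have hsum : ∑ i, h.1 i * (a • x + b • y) i
      = a * (∑ i, h.1 i * x i) + b * (∑ i, h.1 i * y i) := by
    rw [Finset.mul_sum, Finset.mul_sum, ← Finset.sum_add_distrib]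
    refine Finset.sum_congr rfl fun i _ => ?_
    simp only [Pi.add_apply, Pi.smul_apply, smul_eq_mul]
    ring
  show h.2 ≤ ∑ i, h.1 i * (a • x + b • y) i
  rw [hsum]
  have e : a * h.2 + b * h.2 = h.2 := by rw [← add_mul, hab, one_mul]
  linarith [mul_le_mul_of_nonneg_left h1 ha, mul_le_mul_of_nonneg_left h2 hb, e]

/-- uniform epsilon for finitely many strict inequalities -/
lemma exists_pos_mul_lt {ι : Type*} (s : Finset ι) (f g : ι → ℝ) (hg : ∀ j ∈ s, 0 < g j) :
    ∃ ε : ℝ, 0 < ε ∧ ∀ j ∈ s, ε * f j < g j := by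
  classical
  induction s using Finset.induction_on with
  | empty => exact ⟨1, one_pos, by simp⟩
  | insert a s hj ihs =>
    obtain ⟨ε, hε, hε'⟩ := ihs fun j hjs => hg j (Finset.mem_insert_of_mem hjs)
    have hga : 0 < g a := hg a (Finset.mem_insert_self a s)
    have hpos : 0 < g a / (|f a| + 1) := by positivity
    refine ⟨min ε (g a / (|f a| + 1)), lt_min hε hpos, ?_⟩
    intro j hjs
    rcases Finset.mem_insert.1 hjs with rfl | hjs
    · have h1 : min ε (g j / (|f j| + 1)) * f j ≤ (g j / (|f j| + 1)) * |f j| := by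
        calc min ε (g j / (|f j| + 1)) * f j ≤ min ε (g j / (|f j| + 1)) * |f j| :=
              mul_le_mul_of_nonneg_left (le_abs_self _) (le_of_lt (lt_min hε hpos))
        _ ≤ (g j / (|f j| + 1)) * |f j| :=
              mul_le_mul_of_nonneg_right (min_le_right _ _) (abs_nonneg _)
      have h2 : (g j / (|f j| + 1)) * |f j| < g j := by
        rw [div_mul_eq_mul_div, div_lt_iff₀ (by positivity)]
        nlinarith [abs_nonneg (f j)]
      linarith
    · rcases le_or_gt (f j) 0 with hf | hf
      · have : min ε (g a / (|f a| + 1)) * f j ≤ 0 :=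
          mul_nonpos_of_nonneg_of_nonpos (le_of_lt (lt_min hε hpos)) hf
        exact lt_of_le_of_lt this (hg j (Finset.mem_insert_of_mem hjs))
      · calc min ε (g a / (|f a| + 1)) * f j ≤ ε * f j :=
              mul_le_mul_of_nonneg_right (min_le_left _ _) (le_of_lt hf)
        _ < g j := hε' j hjs

/-- a polyhedron has finitely many extreme points -/
lemma extremePoints_finite (H : Finset ((Fin n → ℝ) × ℝ)) :
    (Set.extremePoints ℝ (Pset H)).Finite := by
  classical
  set T : (Fin n → ℝ) → Finset ((Fin n → ℝ) × ℝ) :=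
    fun x => H.filter (fun h => lf h.1 x = h.2) with hT
  have key : ∀ x ∈ Set.extremePoints ℝ (Pset H), ∀ z : Fin n → ℝ,
      (∀ h ∈ T x, lf h.1 z = 0) → z = 0 := by
    intro x hx z hz
    by_contra hzne
    obtain ⟨hxP, hxe⟩ := hx
    obtain ⟨ε, hε, hε'⟩ := exists_pos_mul_lt (H.filter (fun h => ¬ lf h.1 x = h.2))
      (fun h => |lf h.1 z|) (fun h => lf h.1 x - h.2) (by
        intro h hh
        rw [Finset.mem_filter] at hh
        have : h.2 ≤ lf h.1 x := hxP h hh.1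
        cases lt_or_eq_of_le this with
        | inl h' => show 0 < lf h.1 x - h.2; linarith
        | inr h' => exact absurd h'.symm hh.2)
    have hmem : ∀ (c : ℝ), |c| ≤ ε → x + c • z ∈ Pset H := by
      intro c hc
      intro h hh
      show h.2 ≤ ∑ i, h.1 i * (x + c • z) i
      have : (∑ i, h.1 i * (x + c • z) i) = lf h.1 x + c * lf h.1 z := lf_add_smul _ _ _ _
      rw [this]
      by_cases ht : lf h.1 x = h.2
      · have hhT : h ∈ T x := Finset.mem_filter.2 ⟨hh, ht⟩
        rw [hz h hhT, mul_zero, add_zero, ht]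
      · have hhf : h ∈ H.filter (fun h => ¬ lf h.1 x = h.2) := Finset.mem_filter.2 ⟨hh, ht⟩
        have h1 := hε' _ hhf
        have h2 : c * lf h.1 z ≥ -(ε * |lf h.1 z|) := by
          have : |c * lf h.1 z| ≤ ε * |lf h.1 z| := by
            rw [abs_mul]
            exact mul_le_mul_of_nonneg_right hc (abs_nonneg _)
          have := neg_abs_le (c * lf h.1 z)
          linarith
        linarith
    have h1 : x + ε • z ∈ Pset H := hmem ε (by rw [abs_of_pos hε])
    have h2 : x + (-ε) • z ∈ Pset H := hmem (-ε) (by rw [abs_neg, abs_of_pos hε])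
    have hseg : x ∈ openSegment ℝ (x + (-ε) • z) (x + ε • z) := by
      refine ⟨1/2, 1/2, by norm_num, by norm_num, by norm_num, ?_⟩
      module
    have h4 := hxe h1 h2 (by rw [openSegment_symm]; exact hseg)
    have : ε • z = 0 := by
      have h3 : x + ε • z = x + 0 := by rw [add_zero]; exact h4
      exact add_left_cancel h3
    exact hzne (by
      have := smul_eq_zero.1 this
      rcases this with h | h
      · exact absurd h (ne_of_gt hε)
      · exact h)
  -- injectivity of the active-set map on extreme points
  have hinj : Set.InjOn T (Set.extremePoints ℝ (Pset H)) := by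
    intro x hx y hy hTxy
    have hz : ∀ h ∈ T x, lf h.1 (x - y) = 0 := by
      intro h hh
      have hhx : lf h.1 x = h.2 := (Finset.mem_filter.1 hh).2
      have hh2 : h ∈ T y := by rw [← hTxy]; exact hh
      have hhy : lf h.1 y = h.2 := (Finset.mem_filter.1 hh2).2
      rw [lf_sub, hhx, hhy, sub_self]
    have := key x hx (x - y) hz
    exact sub_eq_zero.1 this
  have himg : (T '' (Set.extremePoints ℝ (Pset H))).Finite := by
    refine Set.Finite.subset (H.powerset : Finset _).finite_toSet ?_
    rintro _ ⟨x, _, rfl⟩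
    simp only [Finset.coe_powerset, Set.mem_preimage, Set.mem_powerset_iff, Finset.mem_coe,
      Finset.mem_powerset]
    exact fun u hu => Finset.mem_coe.2 ((Finset.filter_subset _ _) hu)
  exact Set.Finite.of_finite_image himg hinj

end Poly
lemma compact_polyhedron_eq_hull {K : Set (Fin n → ℝ)} (H : Finset ((Fin n → ℝ) × ℝ))
    (hK : K = Pset H) (hc : IsCompact K) :
    K = convexHull ℝ (Set.extremePoints ℝ K) := by
  have hconv : Convex ℝ K := hK ▸ Pset_convex H
  have hfin : (Set.extremePoints ℝ K).Finite := hK ▸ extremePoints_finite H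
  conv_lhs => rw [← closure_convexHull_extremePoints hc hconv]
  exact (Set.Finite.isClosed_convexHull ℝ hfin).closure_eq

section Approx
variable (F : ℕ → Ideal (MvPolynomial (Fin n) 𝕜))

lemma pts_subset_CB {k : ℕ} :
    {x : Fin n → ℝ | 0 < k ∧ ∃ a : Fin n →₀ ℕ, monomial a (1 : 𝕜) ∈ F k ∧
      x = fun i => (a i : ℝ) / k} ⊆ CB F k := by
  rintro x ⟨hk, a, ha, rfl⟩
  refine ⟨ev a, subset_convexHull ℝ _ (mem_spts ha), ?_⟩
  funext i
  simp [ev, div_eq_inv_mul]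

lemma CB_subset_closure_pts (hgr : ∀ p q, F p * F q ≤ F (p + q)) {k : ℕ} (hk : 0 < k) :
    CB F k ⊆ closure (⋃ m : ℕ, {x : Fin n → ℝ | 0 < m ∧ ∃ a : Fin n →₀ ℕ,
      monomial a (1 : 𝕜) ∈ F m ∧ x = fun i => (a i : ℝ) / m}) := by
  classical
  rintro x ⟨y, hy, rfl⟩
  rw [NP_eq, convexHull_eq] at hy
  obtain ⟨ι, tF, w, z, hw0, hw1, hz, hcm⟩ := hy
  rw [Finset.centerMass_eq_of_sum_1 _ _ hw1] at hcm
  have hkne : (k : ℝ) ≠ 0 := Nat.cast_ne_zero.2 hk.ne'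
  have hkpos : (0 : ℝ) < k := by exact_mod_cast hk
  -- choose exponent vectors
  choose A hA1 hA2 using hz
  let A' : ι → (Fin n →₀ ℕ) := fun j => if h : j ∈ tF then A j h else 0
  have hA'mem : ∀ j ∈ tF, monomial (A' j) (1 : 𝕜) ∈ F k := by
    intro j hj; simp only [A', dif_pos hj]; exact hA1 j hj
  have hA'ev : ∀ j ∈ tF, z j = ev (A' j) := by
    intro j hj; simp only [A', dif_pos hj]; exact hA2 j hj
  have htne : tF.Nonempty := by
    by_contra hne
    rw [Finset.not_nonempty_iff_eq_empty] at hne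
    subst hne
    simp at hw1
  obtain ⟨j₀, hj₀⟩ := htne
  have hcard : (1 : ℝ) ≤ tF.card := by exact_mod_cast Finset.card_pos.2 ⟨j₀, hj₀⟩
  -- the scaled vertices
  set v : ι → (Fin n → ℝ) := fun j => (k : ℝ)⁻¹ • z j with hv
  set B : ℝ := (tF.card : ℝ) * ∑ j ∈ tF, ‖v j‖ with hB
  have hB0 : 0 ≤ B := by
    apply mul_nonneg (by positivity)
    exact Finset.sum_nonneg fun j _ => norm_nonneg _
  have hx : (k : ℝ)⁻¹ • y = ∑ j ∈ tF, w j • v j := by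
    rw [← hcm, Finset.smul_sum]
    exact Finset.sum_congr rfl fun j _ => smul_comm _ _ _
  rw [Metric.mem_closure_iff]
  intro ε hε
  obtain ⟨q, hq⟩ := exists_nat_gt (B / ε)
  have hq0 : (0 : ℝ) < q := lt_of_le_of_lt (by positivity) hq
  have hqn : 0 < q := by exact_mod_cast hq0
  have hqne : (q : ℝ) ≠ 0 := hq0.ne'
  -- the rounded weights
  set s0 : ℕ := ∑ l ∈ tF.erase j₀, ⌊w l * q⌋₊ with hs0def
  have hwnn : ∀ l ∈ tF, 0 ≤ w l := hw0
  have hs0le : (s0 : ℝ) ≤ q := by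
    have h1 : (s0 : ℝ) = ∑ l ∈ tF.erase j₀, (⌊w l * q⌋₊ : ℝ) := by
      rw [hs0def]; push_cast; ring
    have h2 : ∑ l ∈ tF.erase j₀, (⌊w l * q⌋₊ : ℝ) ≤ ∑ l ∈ tF.erase j₀, w l * q := by
      refine Finset.sum_le_sum fun l hl => ?_
      exact Nat.floor_le (by
        have := hwnn l (Finset.mem_of_mem_erase hl)
        positivity)
    have h3 : ∑ l ∈ tF.erase j₀, w l * q = (∑ l ∈ tF.erase j₀, w l) * q := by
      rw [Finset.sum_mul]
    have h4 : ∑ l ∈ tF.erase j₀, w l ≤ 1 := by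
      rw [← hw1]
      exact Finset.sum_le_sum_of_subset_of_nonneg (Finset.erase_subset _ _)
        (fun l hl _ => hwnn l hl)
    nlinarith
  have hs0le' : s0 ≤ q := by exact_mod_cast hs0le
  set p : ι → ℕ := fun j => if j = j₀ then q - s0 else ⌊w j * q⌋₊ with hp
  have hpsum : ∑ j ∈ tF, p j = q := by
    rw [← Finset.add_sum_erase _ p hj₀]
    have h1 : p j₀ = q - s0 := if_pos rfl
    have h2 : ∑ l ∈ tF.erase j₀, p l = s0 := by
      refine Finset.sum_congr rfl fun l hl => ?_
      exact if_neg (Finset.ne_of_mem_erase hl)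
    rw [h1, h2]
    omega
  -- the approximating exponent
  set b : Fin n →₀ ℕ := ∑ j ∈ tF, p j • A' j with hbdef
  have hbmem : monomial b (1 : 𝕜) ∈ F (k * q) := by
    have := mon_mem_sum F hgr tF p A' hA'mem (by rw [hpsum]; exact hqn)
    rwa [hpsum] at this
  refine ⟨fun i => (b i : ℝ) / ((k * q : ℕ) : ℝ), Set.mem_iUnion.2 ⟨k * q,
    ⟨Nat.mul_pos hk hqn, b, hbmem, rfl⟩⟩, ?_⟩
  -- now the distance estimate
  have hd : (fun i => (b i : ℝ) / ((k * q : ℕ) : ℝ)) = ∑ j ∈ tF, ((p j : ℝ) / q) • v j := by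
    funext i
    have hbi : (b i : ℝ) = ∑ j ∈ tF, (p j : ℝ) * (A' j i : ℝ) := by
      have h1 : b i = ∑ j ∈ tF, p j * A' j i := by
        rw [hbdef, Finsupp.finset_sum_apply]
        exact Finset.sum_congr rfl fun j _ => by
          rw [Finsupp.smul_apply, smul_eq_mul]
      rw [h1]
      push_cast
      rfl
    rw [hbi, Finset.sum_apply, Finset.sum_div]
    refine Finset.sum_congr rfl fun j hj => ?_
    have hzi : z j i = (A' j i : ℝ) := by rw [hA'ev j hj]; rfl
    simp only [Pi.smul_apply, hv, smul_eq_mul]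
    rw [hzi]
    push_cast
    ring
  have hdist : dist ((k : ℝ)⁻¹ • y) (fun i => (b i : ℝ) / ((k * q : ℕ) : ℝ)) < ε := by
    rw [dist_eq_norm, hd, hx, ← Finset.sum_sub_distrib]
    have hsub : ∀ j ∈ tF, w j • v j - ((p j : ℝ) / q) • v j = (w j - (p j : ℝ) / q) • v j :=
      fun j _ => (sub_smul _ _ _).symm
    rw [Finset.sum_congr rfl hsub]
    have hnorm : ‖∑ j ∈ tF, (w j - (p j : ℝ) / q) • v j‖
        ≤ ∑ j ∈ tF, |w j - (p j : ℝ) / q| * ‖v j‖ := by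
      refine le_trans (norm_sum_le _ _) (Finset.sum_le_sum fun j _ => ?_)
      rw [norm_smul, Real.norm_eq_abs]
    have hbound : ∀ j ∈ tF, |w j - (p j : ℝ) / q| ≤ (tF.card : ℝ) / q := by
      intro j hj
      by_cases hjj : j = j₀
      · subst hjj
        have hpjn : p j = q - s0 := if_pos rfl
        have hpj : (p j : ℝ) = (q : ℝ) - s0 := by
          rw [hpjn, Nat.cast_sub hs0le']
        have hwj : w j = 1 - ∑ l ∈ tF.erase j, w l := by
          have := Finset.add_sum_erase _ w hj
          rw [hw1] at this
          linarith
        have hkey : w j - (p j : ℝ) / q = ∑ l ∈ tF.erase j, ((⌊w l * q⌋₊ : ℝ) / q - w l) := by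
          rw [hwj, hpj, Finset.sum_sub_distrib]
          have hc0 : (s0 : ℝ) = ∑ l ∈ tF.erase j, (⌊w l * q⌋₊ : ℝ) := by
            rw [hs0def]; push_cast; ring
          rw [← Finset.sum_div, ← hc0]
          field_simp
          ring
        rw [hkey]
        refine le_trans (Finset.abs_sum_le_sum_abs _ _) ?_
        have h1 : ∀ l ∈ tF.erase j, |(⌊w l * q⌋₊ : ℝ) / q - w l| ≤ 1 / q := by
          intro l hl
          have hwl : 0 ≤ w l := hwnn l (Finset.mem_of_mem_erase hl)
          have hfl : (⌊w l * q⌋₊ : ℝ) ≤ w l * q := Nat.floor_le (by positivity)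
          have hfl2 : w l * q - 1 < (⌊w l * q⌋₊ : ℝ) := Nat.sub_one_lt_floor _
          have he : (⌊w l * q⌋₊ : ℝ) / q - w l = ((⌊w l * q⌋₊ : ℝ) - w l * q) / q := by
            field_simp
          rw [he, abs_div, abs_of_pos hq0]
          have habs : |(⌊w l * q⌋₊ : ℝ) - w l * q| ≤ 1 :=
            abs_le.2 ⟨by linarith, by linarith⟩
          gcongr
        refine le_trans (Finset.sum_le_sum h1) ?_
        rw [Finset.sum_const, nsmul_eq_mul, mul_one_div]
        have hcle : ((tF.erase j).card : ℝ) ≤ (tF.card : ℝ) := by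
          exact_mod_cast Finset.card_le_card (Finset.erase_subset _ _)
        gcongr
      · have hpjn : p j = ⌊w j * q⌋₊ := if_neg hjj
        have hpj : (p j : ℝ) = (⌊w j * q⌋₊ : ℝ) := by rw [hpjn]
        have hwl : 0 ≤ w j := hwnn j hj
        have hfl : (⌊w j * q⌋₊ : ℝ) ≤ w j * q := Nat.floor_le (by positivity)
        have hfl2 : w j * q - 1 < (⌊w j * q⌋₊ : ℝ) := Nat.sub_one_lt_floor _
        have he : w j - (p j : ℝ) / q = (w j * q - (⌊w j * q⌋₊ : ℝ)) / q := by
          rw [hpj]; field_simp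
        rw [he, abs_div, abs_of_pos hq0]
        have habs : |w j * q - (⌊w j * q⌋₊ : ℝ)| ≤ (tF.card : ℝ) :=
          abs_le.2 ⟨by linarith, by linarith⟩
        gcongr
    calc ‖∑ j ∈ tF, (w j - (p j : ℝ) / q) • v j‖
        ≤ ∑ j ∈ tF, |w j - (p j : ℝ) / q| * ‖v j‖ := hnorm
      _ ≤ ∑ j ∈ tF, ((tF.card : ℝ) / q) * ‖v j‖ :=
          Finset.sum_le_sum fun j hj => mul_le_mul_of_nonneg_right (hbound j hj) (norm_nonneg _)
      _ = ((tF.card : ℝ) / q) * ∑ j ∈ tF, ‖v j‖ := by rw [Finset.mul_sum]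
      _ = B / q := by rw [hB]; ring
      _ < ε := by
          rw [div_lt_iff₀ hq0]
          rw [div_lt_iff₀ hε] at hq
          linarith
  exact hdist

end Approx
end Stmt2Aux

open Stmt2Aux

theorem stmt2 {n : ℕ} {𝕜 : Type*} [Field 𝕜] (F : ℕ → Ideal (MvPolynomial (Fin n) 𝕜))
    (hmon : ∀ k, IsMonomialIdeal (F k)) (hgr : ∀ p q, F p * F q ≤ F (p + q))
    (hpoly : IsPolyhedron (limitBody F)) :
    ∃ c : ℕ, 1 ≤ c ∧ limitBody F = ((c : ℝ)⁻¹) • NP (F c) ∧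
      NObody F = ((c : ℝ)⁻¹) • NP (F c) := by
  classical
  obtain ⟨H, hH⟩ := hpoly
  have hPset : limitBody F = Pset H := hH
  have hPclosed : IsClosed (limitBody F) := by rw [hPset]; exact Pset_closed H
  -- the Newton–Okounkov body coincides with the limit body
  have hNO : NObody F = limitBody F := by
    apply Set.Subset.antisymm
    · apply closure_minimal _ hPclosed
      intro x hx
      obtain ⟨m, hm⟩ := Set.mem_iUnion.1 hx
      exact CB_subset_limit F hm.1 (pts_subset_CB F hm)
    · intro x hx
      obtain ⟨k, hk, hx⟩ := Set.mem_iUnion₂.1 (by rwa [limit_eq_union] at hx)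
      exact CB_subset_closure_pts F hgr hk hx
  suffices h : ∃ c : ℕ, 1 ≤ c ∧ limitBody F = ((c : ℝ)⁻¹) • NP (F c) by
    obtain ⟨c, hc1, hc2⟩ := h
    exact ⟨c, hc1, hc2, hNO.trans hc2⟩
  by_cases hne : (limitBody F).Nonempty
  swap
  · refine ⟨1, le_refl 1, Set.Subset.antisymm ?_ ?_⟩
    · intro x hx; exact absurd ⟨x, hx⟩ hne
    · intro x hx
      exact CB_subset_limit F one_pos hx
  obtain ⟨p₀, hp₀⟩ := hne
  -- all constraint normals are nonnegative
  have hA : ∀ h ∈ H, ∀ i, 0 ≤ h.1 i := by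
    intro h hh i
    by_contra hi
    push_neg at hi
    have hquad : ∀ t : ℝ, 0 ≤ t → (t • (Pi.single i 1 : Fin n → ℝ)) ∈ Quad n := by
      intro t ht j
      simp only [Pi.smul_apply, smul_eq_mul]
      by_cases hji : j = i
      · subst hji; simp; positivity
      · simp [Pi.single_apply, hji]
    have hp₀le : h.2 ≤ lf h.1 p₀ := by rw [hPset] at hp₀; exact hp₀ h hh
    set t : ℝ := (lf h.1 p₀ - h.2 + 1) / (-h.1 i) with ht
    have htpos : 0 ≤ t := by
      apply div_nonneg (by linarith) (by linarith)
    have hmem : p₀ + t • (Pi.single i 1 : Fin n → ℝ) ∈ limitBody F :=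
      limit_add_quad F hp₀ (hquad t htpos)
    rw [hPset] at hmem
    have h1 : h.2 ≤ lf h.1 (p₀ + t • (Pi.single i 1 : Fin n → ℝ)) := hmem h hh
    rw [lf_add_smul, lf_single] at h1
    have h2 : t * h.1 i = -(lf h.1 p₀ - h.2 + 1) := by
      rw [ht]
      have hia : h.1 i ≠ 0 := ne_of_lt hi
      field_simp
    rw [h2] at h1
    linarith
  have hPQuad : limitBody F ⊆ Quad n := limit_subset_quad F
  -- the bound for minimal points
  set M : ℝ := ∑ h ∈ H, ∑ i, (if 0 < h.1 i then max 0 (h.2 / h.1 i) else 0) with hM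
  have hterm_nonneg : ∀ (h : (Fin n → ℝ) × ℝ) (i : Fin n),
      0 ≤ (if 0 < h.1 i then max 0 (h.2 / h.1 i) else 0) := by
    intro h i
    by_cases hi : 0 < h.1 i
    · rw [if_pos hi]; exact le_max_left _ _
    · rw [if_neg hi]
  have hM0 : 0 ≤ M := by
    apply Finset.sum_nonneg
    intro h _
    exact Finset.sum_nonneg fun i _ => hterm_nonneg h i
  have hMb : ∀ h ∈ H, ∀ i, 0 < h.1 i → h.2 / h.1 i ≤ M := by
    intro h hh i hi
    have h1 : h.2 / h.1 i ≤ (if 0 < h.1 i then max 0 (h.2 / h.1 i) else 0) := by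
      rw [if_pos hi]; exact le_max_right _ _
    have h2 : (if 0 < h.1 i then max 0 (h.2 / h.1 i) else 0)
        ≤ ∑ i', (if 0 < h.1 i' then max 0 (h.2 / h.1 i') else 0) :=
      Finset.single_le_sum (fun i' _ => hterm_nonneg h i') (Finset.mem_univ i)
    have h3 : ∑ i', (if 0 < h.1 i' then max 0 (h.2 / h.1 i') else 0) ≤ M := by
      rw [hM]
      exact Finset.single_le_sum
        (fun h' _ => Finset.sum_nonneg fun i' _ => hterm_nonneg h' i') hh
    linarith
  -- every point of P dominates a point of P in the box [0, M]^n
  have hmin : ∀ p ∈ limitBody F, ∃ y, y ∈ limitBody F ∧ (∀ i, 0 ≤ y i) ∧ (∀ i, y i ≤ p i)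
      ∧ (∀ i, y i ≤ M) := by
    intro p hp
    have hp0 : (0 : Fin n → ℝ) ≤ p := by
      intro i; exact hPQuad hp i
    have hpS : p ∈ limitBody F ∩ Set.Icc 0 p := ⟨hp, Set.mem_Icc.2 ⟨hp0, le_refl p⟩⟩
    have hScomp : IsCompact (limitBody F ∩ Set.Icc 0 p) := isCompact_Icc.inter_left hPclosed
    have hcont : ContinuousOn (fun y : Fin n → ℝ => ∑ i, y i) (limitBody F ∩ Set.Icc 0 p) :=
      (continuous_finset_sum _ fun i _ => continuous_apply i).continuousOn
    obtain ⟨y, hyS, hymin⟩ := hScomp.exists_isMinOn ⟨p, hpS⟩ hcont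
    have hyP : y ∈ limitBody F := hyS.1
    have hy0 : (0 : Fin n → ℝ) ≤ y := (Set.mem_Icc.1 hyS.2).1
    have hyp : y ≤ p := (Set.mem_Icc.1 hyS.2).2
    refine ⟨y, hyP, fun i => hy0 i, fun i => hyp i, ?_⟩
    intro i
    by_contra hgt
    push_neg at hgt
    -- all constraints with positive i-th coefficient are slack at y
    have hslack : ∀ h ∈ H, 0 < h.1 i → h.2 < lf h.1 y := by
      intro h hh hi
      have h1 : h.1 i * y i ≤ lf h.1 y :=
        Finset.single_le_sum (f := fun j => h.1 j * y j)
          (fun j _ => mul_nonneg (hA h hh j) (hy0 j)) (Finset.mem_univ i)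
      have h2 : h.2 ≤ h.1 i * M := by
        have := hMb h hh i hi
        rw [div_le_iff₀ hi] at this
        linarith [this]
      have h3 : h.1 i * M < h.1 i * y i := mul_lt_mul_of_pos_left hgt hi
      linarith
    obtain ⟨δ₀, hδ₀, hδ'⟩ := exists_pos_mul_lt H (fun h => h.1 i)
      (fun h => if 0 < h.1 i then lf h.1 y - h.2 else 1) (by
        intro h hh
        show 0 < if 0 < h.1 i then lf h.1 y - h.2 else 1
        split_ifs with hi
        · linarith [hslack h hh hi]
        · exact one_pos)
    set δ : ℝ := min δ₀ (y i) with hδ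
    have hδpos : 0 < δ := lt_min hδ₀ (lt_of_le_of_lt hM0 hgt)
    have hδle : δ ≤ y i := min_le_right _ _
    set y' : Fin n → ℝ := y + (-δ) • (Pi.single i 1 : Fin n → ℝ) with hy'
    have hy'P : y' ∈ limitBody F := by
      rw [hPset]
      intro h hh
      have : lf h.1 y' = lf h.1 y + (-δ) * h.1 i := by rw [hy', lf_add_smul, lf_single]
      show h.2 ≤ lf h.1 y'
      rw [this]
      by_cases hi : 0 < h.1 i
      · have h1 := hδ' h hh
        rw [if_pos hi] at h1
        have h2 : δ * h.1 i ≤ δ₀ * h.1 i :=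
          mul_le_mul_of_nonneg_right (min_le_left _ _) (le_of_lt hi)
        linarith
      · have h0 : h.1 i = 0 := le_antisymm (not_lt.1 hi) (hA h hh i)
        rw [h0]
        have := (by rw [hPset] at hyP; exact hyP h hh : h.2 ≤ lf h.1 y)
        linarith
    have hy'coord : ∀ j, y' j = if j = i then y i - δ else y j := by
      intro j
      rw [hy']
      simp only [Pi.add_apply, Pi.smul_apply, smul_eq_mul]
      by_cases hji : j = i
      · subst hji
        rw [if_pos rfl, Pi.single_eq_same]
        ring
      · rw [if_neg hji]
        simp [Pi.single_apply, hji]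
    have hy'S : y' ∈ limitBody F ∩ Set.Icc 0 p := by
      refine ⟨hy'P, Set.mem_Icc.2 ⟨?_, ?_⟩⟩
      · intro j
        rw [hy'coord j]
        by_cases hji : j = i
        · rw [if_pos hji]; show (0:ℝ) ≤ y i - δ; linarith
        · rw [if_neg hji]; exact hy0 j
      · intro j
        rw [hy'coord j]
        by_cases hji : j = i
        · rw [if_pos hji, hji]; have := hyp i; show y i - δ ≤ p i; linarith [hyp i]
        · rw [if_neg hji]; exact hyp j
    have hsum : ∑ j, y' j = (∑ j, y j) - δ := by
      have h : ∀ j ∈ Finset.univ, y' j = y j + (if j = i then -δ else 0) := by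
        intro j _
        rw [hy'coord j]
        by_cases hji : j = i
        · rw [if_pos hji, if_pos hji, hji]; ring
        · rw [if_neg hji, if_neg hji]; ring
      rw [Finset.sum_congr rfl h, Finset.sum_add_distrib,
        Finset.sum_ite_eq' Finset.univ i (fun _ => -δ), if_pos (Finset.mem_univ i)]
      ring
    have := isMinOn_iff.1 hymin y' hy'S
    rw [hsum] at this
    linarith
  -- the compact part K and its extreme points
  set K : Set (Fin n → ℝ) := limitBody F ∩ Set.Icc 0 (fun _ => M) with hKdef
  have hKcomp : IsCompact K := isCompact_Icc.inter_left hPclosed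
  set H' : Finset ((Fin n → ℝ) × ℝ) := H
      ∪ Finset.image (fun i => ((Pi.single i 1 : Fin n → ℝ), (0:ℝ))) Finset.univ
      ∪ Finset.image (fun i => (-(Pi.single i 1 : Fin n → ℝ), -M)) Finset.univ with hH'
  have hK : K = Pset H' := by
    ext x
    constructor
    · rintro ⟨hxP, hxI⟩
      intro h hh
      rcases Finset.mem_union.1 hh with hh | hh
      · rcases Finset.mem_union.1 hh with hh | hh
        · rw [hPset] at hxP; exact hxP h hh
        · obtain ⟨i, -, rfl⟩ := Finset.mem_image.1 hh
          show (0:ℝ) ≤ ∑ j, (Pi.single i 1 : Fin n → ℝ) j * x j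
          have := lf_single' x i
          unfold lf at this
          rw [this]
          exact (Set.mem_Icc.1 hxI).1 i
      · obtain ⟨i, -, rfl⟩ := Finset.mem_image.1 hh
        show -M ≤ ∑ j, (-(Pi.single i 1 : Fin n → ℝ)) j * x j
        have h2 := lf_neg (Pi.single i 1 : Fin n → ℝ) x
        have h3 := lf_single' x i
        unfold lf at h2 h3
        rw [h2, h3]
        have := (Set.mem_Icc.1 hxI).2 i
        simpa using this
    · intro hx
      refine ⟨?_, Set.mem_Icc.2 ⟨?_, ?_⟩⟩
      · rw [hPset]
        intro h hh
        exact hx h (Finset.mem_union_left _ (Finset.mem_union_left _ hh))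
      · intro i
        have := hx ((Pi.single i 1 : Fin n → ℝ), (0:ℝ)) (Finset.mem_union_left _
          (Finset.mem_union_right _ (Finset.mem_image.2 ⟨i, Finset.mem_univ i, rfl⟩)))
        have h2 := lf_single' x i
        unfold lf at h2
        show (0:ℝ) ≤ x i
        rw [← h2]
        exact this
      · intro i
        have := hx (-(Pi.single i 1 : Fin n → ℝ), -M) (Finset.mem_union_right _
          (Finset.mem_image.2 ⟨i, Finset.mem_univ i, rfl⟩))
        have h2 := lf_neg (Pi.single i 1 : Fin n → ℝ) x
        unfold lf at h2
        show x i ≤ (fun _ => M) i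
        have h3 := lf_single' x i
        unfold lf at h3
        simp only at this
        rw [h2, h3] at this
        simpa using (neg_le_neg_iff.1 (by simpa using this))
  have hKeq : K = convexHull ℝ (Set.extremePoints ℝ K) :=
    compact_polyhedron_eq_hull H' hK hKcomp
  have hfin : (Set.extremePoints ℝ K).Finite := by
    rw [hK]; exact extremePoints_finite H'
  -- choose a common denominator
  have hext : ∀ v, v ∈ hfin.toFinset → ∃ k : ℕ, 0 < k ∧ v ∈ CB F k := by
    intro v hv
    have hvK : v ∈ K := extremePoints_subset (hfin.mem_toFinset.1 hv)
    have hvP : v ∈ limitBody F := hvK.1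
    obtain ⟨k, hk, hvk⟩ := Set.mem_iUnion₂.1 (by rwa [limit_eq_union] at hvP)
    exact ⟨k, hk, hvk⟩
  choose kf hkf1 hkf2 using hext
  let kf' : (Fin n → ℝ) → ℕ := fun v => if h : v ∈ hfin.toFinset then kf v h else 1
  have hkf'pos : ∀ v, 0 < kf' v := by
    intro v
    by_cases h : v ∈ hfin.toFinset
    · simp only [kf', dif_pos h]; exact hkf1 v h
    · simp only [kf', dif_neg h]; exact one_pos
  set c : ℕ := ∏ v ∈ hfin.toFinset, kf' v with hc
  have hc0 : 0 < c := Finset.prod_pos fun v _ => hkf'pos v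
  have hc1 : 1 ≤ c := hc0
  have hsub : Set.extremePoints ℝ K ⊆ CB F c := by
    intro v hv
    have hvT : v ∈ hfin.toFinset := hfin.mem_toFinset.2 hv
    have hv1 : v ∈ CB F (kf' v) := by
      simp only [kf', dif_pos hvT]; exact hkf2 v hvT
    have hmono := CB_mono F hgr (hkf'pos v)
      (Finset.prod_pos fun u hu => hkf'pos u : 0 < ∏ u ∈ hfin.toFinset.erase v, kf' u)
    have heq : kf' v * ∏ u ∈ hfin.toFinset.erase v, kf' u = c := Finset.mul_prod_erase _ _ hvT
    rw [heq] at hmono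
    exact hmono hv1
  have hKsub : K ⊆ CB F c := by
    rw [hKeq]
    exact convexHull_min hsub (CB_convex F c)
  have hfinal : limitBody F ⊆ CB F c := by
    intro p hp
    obtain ⟨y, hyP, hy0, hyp, hyM⟩ := hmin p hp
    have hyK : y ∈ K := ⟨hyP, Set.mem_Icc.2 ⟨fun i => hy0 i, fun i => hyM i⟩⟩
    have hq : p - y ∈ Quad n := fun i => by
      have := hyp i
      simp only [Pi.sub_apply]
      linarith
    have := CB_add_quad F hc0 (hKsub hyK) hq
    rwa [show y + (p - y) = p by abel] at this
  exact ⟨c, hc1, Set.Subset.antisymm hfinal (CB_subset_limit F hc0)⟩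
end

section
/- Let ℐ = {I_k}_{k∈ℕ} be a graded family of monomial ideals. Then the following are equivalent: (i) there exists an integer c such that Δ(ℐ) = (1/c)·NP(I_c); (ii) there exists an integer c such that (1/c)·NP(I_c) = (1/(kc))·NP(I_{kc}) for all positive integers k. -/
open MvPolynomial Pointwise

/-! ### Auxiliary material -/

open Filter Topology

section Aux

variable {n : ℕ} {𝕜 : Type*} [Field 𝕜]

/-- Exponent vector viewed as a real vector. -/
def vec {n : ℕ} (a : Fin n →₀ ℕ) : Fin n → ℝ := fun i => (a i : ℝ)

lemma NP_eq_hull (I : Ideal (MvPolynomial (Fin n) 𝕜)) :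
    NP I = convexHull ℝ (vec '' {a : Fin n →₀ ℕ | monomial a (1 : 𝕜) ∈ I}) := by
  unfold NP
  congr 1
  ext x
  constructor
  · rintro ⟨a, ha, rfl⟩; exact ⟨a, ha, rfl⟩
  · rintro ⟨a, ha, rfl⟩; exact ⟨a, ha, rfl⟩

lemma mono_mul (F : ℕ → Ideal (MvPolynomial (Fin n) 𝕜)) (hgr : ∀ p q, F p * F q ≤ F (p + q))
    {p q : ℕ} {a b : Fin n →₀ ℕ} (ha : monomial a (1 : 𝕜) ∈ F p) (hb : monomial b (1 : 𝕜) ∈ F q) :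
    monomial (a + b) (1 : 𝕜) ∈ F (p + q) := by
  have h := hgr p q (Ideal.mul_mem_mul ha hb)
  rwa [monomial_mul, one_mul] at h

lemma mono_smul (F : ℕ → Ideal (MvPolynomial (Fin n) 𝕜)) (hgr : ∀ p q, F p * F q ≤ F (p + q))
    {p : ℕ} {a : Fin n →₀ ℕ} (ha : monomial a (1 : 𝕜) ∈ F p) :
    ∀ m : ℕ, 0 < m → monomial (m • a) (1 : 𝕜) ∈ F (m * p) := by
  intro m
  induction m with
  | zero => intro h; exact absurd h (lt_irrefl 0)
  | succ m ih =>
    intro _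
    rcases Nat.eq_zero_or_pos m with hm | hm
    · subst hm; simpa using ha
    · have h := mono_mul F hgr (ih hm) ha
      have h2 : (m + 1) • a = m • a + a := succ_nsmul a m
      have h3 : (m + 1) * p = m * p + p := by ring
      rw [h2, h3]; exact h

/-- The pre-closure set defining the Newton–Okounkov body. -/
def Sset (F : ℕ → Ideal (MvPolynomial (Fin n) 𝕜)) : Set (Fin n → ℝ) :=
  ⋃ k : ℕ, {x | 0 < k ∧ ∃ a : Fin n →₀ ℕ, monomial a (1 : 𝕜) ∈ F k ∧
    x = fun i => (a i : ℝ) / k}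

lemma NObody_eq (F : ℕ → Ideal (MvPolynomial (Fin n) 𝕜)) : NObody F = closure (Sset F) := rfl

lemma mem_Sset {F : ℕ → Ideal (MvPolynomial (Fin n) 𝕜)} {k : ℕ} (hk : 0 < k)
    {a : Fin n →₀ ℕ} (ha : monomial a (1 : 𝕜) ∈ F k) :
    (fun i => (a i : ℝ) / k) ∈ Sset F :=
  Set.mem_iUnion.2 ⟨k, hk, a, ha, rfl⟩

/-- A rational convex combination (with weights `p/N`, `(N-p)/N`) of two points of `Sset`
lies in `Sset`. -/
lemma rat_combo_mem_Sset (F : ℕ → Ideal (MvPolynomial (Fin n) 𝕜))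
    (hgr : ∀ p q, F p * F q ≤ F (p + q))
    {x y : Fin n → ℝ} (hx : x ∈ Sset F) (hy : y ∈ Sset F)
    {N p : ℕ} (hN : 0 < N) (hpN : p ≤ N) :
    ((p : ℝ) / N) • x + (1 - (p : ℝ) / N) • y ∈ Sset F := by
  obtain ⟨k, hk, a, ha, rfl⟩ : ∃ k, 0 < k ∧ ∃ a : Fin n →₀ ℕ, monomial a (1 : 𝕜) ∈ F k ∧
      x = fun i => (a i : ℝ) / k := by
    obtain ⟨k, hk, a, ha, hxa⟩ := Set.mem_iUnion.1 hx
    exact ⟨k, hk, a, ha, hxa⟩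
  obtain ⟨l, hl, b, hb, rfl⟩ : ∃ l, 0 < l ∧ ∃ b : Fin n →₀ ℕ, monomial b (1 : 𝕜) ∈ F l ∧
      y = fun i => (b i : ℝ) / l := by
    obtain ⟨l, hl, b, hb, hyb⟩ := Set.mem_iUnion.1 hy
    exact ⟨l, hl, b, hb, hyb⟩
  have hN0 : (N : ℝ) ≠ 0 := Nat.cast_ne_zero.2 hN.ne'
  have hk0 : (k : ℝ) ≠ 0 := Nat.cast_ne_zero.2 hk.ne'
  have hl0 : (l : ℝ) ≠ 0 := Nat.cast_ne_zero.2 hl.ne'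
  rcases Nat.eq_zero_or_pos p with hp | hp
  · subst hp
    have h0 : ((0 : ℕ) : ℝ) / N = 0 := by simp
    rw [h0]
    simpa using mem_Sset hl hb
  rcases eq_or_lt_of_le hpN with hpN' | hpN'
  · subst hpN'
    have h1 : (p : ℝ) / p = 1 := div_self (Nat.cast_ne_zero.2 hp.ne')
    rw [h1]
    simpa using mem_Sset hk ha
  · have h1 : monomial ((p * l) • a) (1 : 𝕜) ∈ F (p * l * k) :=
      mono_smul F hgr ha _ (Nat.mul_pos hp hl)
    have h2 : monomial (((N - p) * k) • b) (1 : 𝕜) ∈ F ((N - p) * k * l) :=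
      mono_smul F hgr hb _ (Nat.mul_pos (Nat.sub_pos_of_lt hpN') hk)
    have h3 := mono_mul F hgr h1 h2
    have hKpos : 0 < p * l * k + (N - p) * k * l := by positivity
    have hmem := mem_Sset (F := F) hKpos h3
    convert hmem using 1
    funext i
    simp only [Pi.add_apply, Pi.smul_apply, smul_eq_mul, Finsupp.add_apply, Finsupp.smul_apply,
      smul_eq_mul]
    have hcast : ((p * l * k + (N - p) * k * l : ℕ) : ℝ) = (N : ℝ) * k * l := by
      push_cast [Nat.cast_sub hpN]
      ring
    rw [hcast]
    push_cast [Nat.cast_sub hpN]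
    field_simp

lemma combo_mem_closure (F : ℕ → Ideal (MvPolynomial (Fin n) 𝕜))
    (hgr : ∀ p q, F p * F q ≤ F (p + q)) {x y : Fin n → ℝ}
    (hx : x ∈ Sset F) (hy : y ∈ Sset F) {t s : ℝ} (ht : 0 ≤ t) (hs : 0 ≤ s) (hts : t + s = 1) :
    t • x + s • y ∈ closure (Sset F) := by
  have hs' : s = 1 - t := by linarith
  subst hs'
  have ht1 : t ≤ 1 := by linarith
  set u : ℕ → ℝ := fun N => (⌊t * (N : ℝ)⌋₊ : ℝ) / (N : ℝ) with hu
  have hut : Tendsto u atTop (𝓝 t) :=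
    (tendsto_nat_floor_mul_div_atTop ht).comp tendsto_natCast_atTop_atTop
  have htend : Tendsto (fun N => (u N) • x + (1 - u N) • y) atTop (𝓝 (t • x + (1 - t) • y)) :=
    (hut.smul_const x).add ((tendsto_const_nhds.sub hut).smul_const y)
  refine mem_closure_of_tendsto htend ?_
  filter_upwards [eventually_ge_atTop 1] with N hN
  have hNpos : 0 < N := hN
  have hfl : ⌊t * (N : ℝ)⌋₊ ≤ N := by
    have h : t * (N : ℝ) ≤ (N : ℝ) := by nlinarith [Nat.cast_nonneg (α := ℝ) N]
    calc ⌊t * (N : ℝ)⌋₊ ≤ ⌊(N : ℝ)⌋₊ := Nat.floor_mono h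
    _ = N := Nat.floor_natCast N
  exact rat_combo_mem_Sset F hgr hx hy hNpos hfl

lemma convex_closure_Sset (F : ℕ → Ideal (MvPolynomial (Fin n) 𝕜))
    (hgr : ∀ p q, F p * F q ≤ F (p + q)) : Convex ℝ (closure (Sset F)) := by
  intro x hx y hy t s ht hs hts
  have hcont : Continuous (fun p : (Fin n → ℝ) × (Fin n → ℝ) => t • p.1 + s • p.2) := by
    fun_prop
  have hmaps : Set.MapsTo (fun p : (Fin n → ℝ) × (Fin n → ℝ) => t • p.1 + s • p.2)
      (Sset F ×ˢ Sset F) (closure (Sset F)) := fun p hp =>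
    combo_mem_closure F hgr hp.1 hp.2 ht hs hts
  have h2 := hmaps.closure hcont
  rw [closure_prod_eq, closure_closure] at h2
  exact h2 (Set.mk_mem_prod hx hy)

/-- Density lemma: `(1/c) NP(I_c) ⊆ Δ(ℐ)`. -/
lemma smul_NP_subset_NObody (F : ℕ → Ideal (MvPolynomial (Fin n) 𝕜))
    (hgr : ∀ p q, F p * F q ≤ F (p + q)) {c : ℕ} (hc : 0 < c) :
    ((c : ℝ)⁻¹) • NP (F c) ⊆ NObody F := by
  rw [NObody_eq, NP_eq_hull, ← convexHull_smul]
  refine convexHull_min ?_ (convex_closure_Sset F hgr)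
  intro x hx
  rw [Set.mem_smul_set] at hx
  obtain ⟨y, ⟨a, ha, rfl⟩, rfl⟩ := hx
  have heq : (c : ℝ)⁻¹ • vec a = fun i => (a i : ℝ) / c := by
    funext i
    simp [vec, div_eq_inv_mul]
  rw [heq]
  exact subset_closure (mem_Sset hc ha)

/-- The nonnegative orthant. -/
def Orth (n : ℕ) : Set (Fin n → ℝ) := {x | ∀ i, 0 ≤ x i}

lemma convex_Orth : Convex ℝ (Orth n) := by
  intro x hx y hy a b ha hb _ i
  exact add_nonneg (mul_nonneg ha (hx i)) (mul_nonneg hb (hy i))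

lemma isClosed_Orth : IsClosed (Orth n) := by
  have h : Orth n = ⋂ i, {x : Fin n → ℝ | 0 ≤ x i} := by
    ext x; simp [Orth]
  rw [h]
  exact isClosed_iInter fun i => isClosed_le continuous_const (continuous_apply i)

lemma orthant_convexHull :
    convexHull ℝ (vec '' (Set.univ : Set (Fin n →₀ ℕ))) = Orth n := by
  apply subset_antisymm
  · refine convexHull_min ?_ convex_Orth
    rintro x ⟨a, -, rfl⟩ i
    exact Nat.cast_nonneg _
  · intro v hv
    classical
    set M : ℕ := ⌈∑ i, v i⌉₊ + 1 with hM
    have hMpos : (0 : ℝ) < M := by positivity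
    have hsum : ∑ i, v i < M := by
      calc ∑ i, v i ≤ (⌈∑ i, v i⌉₊ : ℝ) := Nat.le_ceil _
      _ < M := by rw [hM]; push_cast; linarith
    set w : Option (Fin n) → ℝ := fun o => o.elim (1 - (∑ i, v i) / M) (fun i => v i / M) with hw
    set z : Option (Fin n) → (Fin n → ℝ) :=
      fun o => o.elim 0 (fun i => vec (Finsupp.single i M)) with hz
    have hw0 : ∀ o ∈ (Finset.univ : Finset (Option (Fin n))), 0 ≤ w o := by
      rintro (_ | i) -
      · simp only [hw, Option.elim]
        have h : (∑ i, v i) / M ≤ 1 := by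
          rw [div_le_one hMpos]; linarith
        linarith
      · exact div_nonneg (hv i) hMpos.le
    have hw1 : ∑ o : Option (Fin n), w o = 1 := by
      rw [Fintype.sum_option]
      simp only [hw, Option.elim]
      rw [← Finset.sum_div]
      ring
    have hz1 : ∀ o ∈ (Finset.univ : Finset (Option (Fin n))), z o ∈ vec '' Set.univ := by
      rintro (_ | i) -
      · exact ⟨0, trivial, by funext j; simp [vec, hz]⟩
      · exact ⟨Finsupp.single i M, trivial, rfl⟩
    have hcm := Finset.centerMass_mem_convexHull (Finset.univ : Finset (Option (Fin n)))
      hw0 (by rw [hw1]; norm_num) hz1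
    have heq : (Finset.univ : Finset (Option (Fin n))).centerMass w z = v := by
      rw [Finset.centerMass_eq_of_sum_1 _ _ hw1]
      funext j
      rw [Finset.sum_apply, Fintype.sum_option]
      have hterm : ∀ i : Fin n, (w (some i) • z (some i)) j
          = if i = j then v i / (M : ℝ) * M else 0 := by
        intro i
        simp only [hw, hz, Option.elim, Pi.smul_apply, smul_eq_mul, vec, Finsupp.single_apply]
        split <;> simp
      rw [Finset.sum_congr rfl (fun i _ => hterm i), Finset.sum_ite_eq' Finset.univ j]
      simp only [hw, hz, Option.elim, Pi.smul_apply, Pi.zero_apply, smul_eq_mul, mul_zero,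
        zero_add, Finset.mem_univ, if_true]
      field_simp
    rw [← heq]
    exact hcm

/-- The Newton polyhedron of a monomial ideal is closed. -/
lemma NP_isClosed (I : Ideal (MvPolynomial (Fin n) 𝕜)) (hI : IsMonomialIdeal I) :
    IsClosed (NP I) := by
  classical
  rw [NP_eq_hull]
  set E := {a : Fin n →₀ ℕ | monomial a (1 : 𝕜) ∈ I} with hE
  rcases Set.eq_empty_or_nonempty E with hEe | hEne
  · rw [hEe]
    simp
  obtain ⟨S₀, hIS⟩ := hI
  set φ : (Fin n →₀ ℕ) → MvPolynomial (Fin n) 𝕜 := fun a => monomial a (1 : 𝕜) with hφ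
  have hφinj : Function.Injective φ := monomial_left_injective one_ne_zero
  obtain ⟨G, hG⟩ : I.FG := IsNoetherian.noetherian I
  have hGI : ∀ g ∈ G, g ∈ Ideal.span (φ '' S₀) := by
    intro g hg
    rw [← hIS, ← hG]
    exact Ideal.subset_span hg
  have hfin : ∀ g ∈ G, ∃ u : Finset (MvPolynomial (Fin n) 𝕜),
      ↑u ⊆ φ '' S₀ ∧ g ∈ Ideal.span (u : Set (MvPolynomial (Fin n) 𝕜)) := fun g hg =>
    Submodule.mem_span_finite_of_mem_span (hGI g hg)
  choose u hu1 hu2 using hfin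
  set U : Finset (MvPolynomial (Fin n) 𝕜) := G.attach.biUnion (fun g => u g.1 g.2) with hU
  have hUS : (U : Set (MvPolynomial (Fin n) 𝕜)) ⊆ φ '' S₀ := by
    intro x hx
    simp only [hU, Finset.coe_biUnion, Set.mem_iUnion] at hx
    obtain ⟨g, hg, hx⟩ := hx
    exact hu1 g.1 g.2 hx
  have hspanU : Ideal.span (U : Set (MvPolynomial (Fin n) 𝕜)) = I := by
    apply le_antisymm
    · rw [hIS]
      exact Ideal.span_mono hUS
    · rw [← hG, Ideal.span_le]
      intro g hg
      have h2 := hu2 g hg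
      refine Ideal.span_mono ?_ h2
      intro x hx
      simp only [hU, Finset.coe_biUnion, Set.mem_iUnion]
      exact ⟨⟨g, hg⟩, Finset.mem_attach _ _, hx⟩
  set T : Set (Fin n →₀ ℕ) := S₀ ∩ (φ ⁻¹' ↑U) with hT
  have hTfin : T.Finite := (U.finite_toSet.preimage hφinj.injOn).subset Set.inter_subset_right
  have hφT : φ '' T = ↑U := by
    apply subset_antisymm
    · rintro x ⟨a, ha, rfl⟩
      exact ha.2
    · intro x hx
      obtain ⟨a, ha, rfl⟩ := hUS hx
      exact ⟨a, ⟨ha, hx⟩, rfl⟩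
  have hspanT : Ideal.span (φ '' T) = I := by rw [hφT]; exact hspanU
  have hdom : ∀ a ∈ E, ∃ t ∈ T, t ≤ a := by
    intro a ha
    have hmem : φ a ∈ Ideal.span ((fun s => monomial s (1 : 𝕜)) '' T) := by
      rw [show ((fun s => monomial s (1 : 𝕜)) '' T) = φ '' T from rfl, hspanT]
      exact ha
    rw [mem_ideal_span_monomial_image] at hmem
    refine hmem a ?_
    rw [hφ]
    simp [support_monomial]
  have hmain : convexHull ℝ (vec '' E) = convexHull ℝ (vec '' T) + Orth n := by
    apply subset_antisymm
    · refine convexHull_min ?_ ((convex_convexHull ℝ _).add convex_Orth)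
      rintro x ⟨a, ha, rfl⟩
      obtain ⟨t, ht, hle⟩ := hdom a ha
      have h1 : vec t ∈ convexHull ℝ (vec '' T) := subset_convexHull ℝ _ ⟨t, ht, rfl⟩
      have h2 : vec a - vec t ∈ Orth n := fun i =>
        sub_nonneg.2 (by exact_mod_cast Nat.cast_le.2 (hle i))
      have h3 := Set.add_mem_add h1 h2
      rwa [show vec t + (vec a - vec t) = vec a by abel] at h3
    · rw [← orthant_convexHull, ← convexHull_add]
      apply convexHull_mono
      rintro x ⟨x1, ⟨t, ht, rfl⟩, x2, ⟨m, -, rfl⟩, rfl⟩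
      refine ⟨t + m, ?_, ?_⟩
      · show monomial (t + m) (1 : 𝕜) ∈ I
        rw [← hspanT,
          show (φ '' T) = ((fun s => monomial s (1 : 𝕜)) '' T) from rfl,
          mem_ideal_span_monomial_image]
        intro xi hxi
        rw [support_monomial] at hxi
        simp only [one_ne_zero, if_false, Finset.mem_singleton] at hxi
        subst hxi
        exact ⟨t, ht, le_self_add⟩
      · funext i
        simp [vec]
  rw [hmain]
  exact IsClosed.add_left_of_isCompact isClosed_Orth
    ((hTfin.image vec).isCompact_convexHull ℝ)

/-- Under the stabilization hypothesis, the pre-closure set is contained in `(1/c) NP(I_c)`. -/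
lemma Sset_subset_of_stab (F : ℕ → Ideal (MvPolynomial (Fin n) 𝕜))
    (hgr : ∀ p q, F p * F q ≤ F (p + q)) {c : ℕ} (hc : 0 < c)
    (hstab : ∀ k : ℕ, 0 < k →
      ((c : ℝ)⁻¹) • NP (F c) = (((k * c : ℕ) : ℝ)⁻¹) • NP (F (k * c))) :
    Sset F ⊆ ((c : ℝ)⁻¹) • NP (F c) := by
  intro x hx
  obtain ⟨k, hk, a, ha, rfl⟩ : ∃ k, 0 < k ∧ ∃ a : Fin n →₀ ℕ, monomial a (1 : 𝕜) ∈ F k ∧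
      x = fun i => (a i : ℝ) / k := by
    obtain ⟨k, hk, a, ha, hxa⟩ := Set.mem_iUnion.1 hx
    exact ⟨k, hk, a, ha, hxa⟩
  rw [hstab k hk]
  have hmem : monomial (c • a) (1 : 𝕜) ∈ F (k * c) := by
    rw [mul_comm]
    exact mono_smul F hgr ha c hc
  have hNP : vec (c • a) ∈ NP (F (k * c)) :=
    subset_convexHull ℝ _ ⟨c • a, hmem, rfl⟩
  refine Set.mem_smul_set.2 ⟨vec (c • a), hNP, ?_⟩
  funext i
  have hk0 : (k : ℝ) ≠ 0 := Nat.cast_ne_zero.2 hk.ne'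
  have hc0 : (c : ℝ) ≠ 0 := Nat.cast_ne_zero.2 hc.ne'
  simp only [Pi.smul_apply, smul_eq_mul, vec, Finsupp.smul_apply, smul_eq_mul]
  push_cast
  field_simp

end Aux

theorem stmt3 {n : ℕ} {𝕜 : Type*} [Field 𝕜] (F : ℕ → Ideal (MvPolynomial (Fin n) 𝕜))
    (hmon : ∀ k, IsMonomialIdeal (F k)) (hgr : ∀ p q, F p * F q ≤ F (p + q)) :
    (∃ c : ℕ, 0 < c ∧ NObody F = ((c : ℝ)⁻¹) • NP (F c)) ↔
      (∃ c : ℕ, 0 < c ∧ ∀ k : ℕ, 0 < k →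
        ((c : ℝ)⁻¹) • NP (F c) = (((k * c : ℕ) : ℝ)⁻¹) • NP (F (k * c))) := by
  constructor
  · rintro ⟨c, hc, hNO⟩
    refine ⟨c, hc, fun k hk => ?_⟩
    have hkc : 0 < k * c := Nat.mul_pos hk hc
    apply subset_antisymm
    · -- (1/c) NP(F c) ⊆ (1/(kc)) NP(F (kc))
      rw [NP_eq_hull (F c), ← convexHull_smul]
      refine convexHull_min ?_ ((convex_convexHull ℝ _).smul _)
      intro x hx
      rw [Set.mem_smul_set] at hx
      obtain ⟨y, ⟨a, ha, rfl⟩, rfl⟩ := hx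
      have hmem : monomial (k • a) (1 : 𝕜) ∈ F (k * c) := mono_smul F hgr ha k hk
      have hNP : vec (k • a) ∈ NP (F (k * c)) :=
        subset_convexHull ℝ _ ⟨k • a, hmem, rfl⟩
      refine Set.mem_smul_set.2 ⟨vec (k • a), hNP, ?_⟩
      funext i
      have hk0 : (k : ℝ) ≠ 0 := Nat.cast_ne_zero.2 hk.ne'
      have hc0 : (c : ℝ) ≠ 0 := Nat.cast_ne_zero.2 hc.ne'
      simp only [Pi.smul_apply, smul_eq_mul, vec, Finsupp.smul_apply, smul_eq_mul]
      push_cast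
      field_simp
    · rw [← hNO]
      exact smul_NP_subset_NObody F hgr hkc
  · rintro ⟨c, hc, hstab⟩
    refine ⟨c, hc, ?_⟩
    apply subset_antisymm
    · have hclosed : IsClosed (((c : ℝ)⁻¹) • NP (F c)) :=
        (NP_isClosed (F c) (hmon c)).smul_of_ne_zero
          (inv_ne_zero (Nat.cast_ne_zero.2 hc.ne'))
      rw [NObody_eq]
      exact closure_minimal (Sset_subset_of_stab F hgr hc hstab) hclosed
    · exact smul_NP_subset_NObody F hgr hc
end

section
/- Let v ∈ ℝⁿ be a point of a polyhedron P ⊆ ℝⁿ_{≥0} with P + ℝⁿ_{≥0} ⊆ P. Then v can be written as v = u + w, where u lies on a compact face of P and w ∈ ℝⁿ_{≥0}. -/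
open MvPolynomial Pointwise

private lemma lin_combo {n : ℕ} (c : Fin n → ℝ) (a b : ℝ) (x y : Fin n → ℝ) :
    ∑ i, c i * (a • x + b • y) i = a * ∑ i, c i * x i + b * ∑ i, c i * y i := by
  rw [Finset.mul_sum, Finset.mul_sum, ← Finset.sum_add_distrib]
  refine Finset.sum_congr rfl fun i _ => ?_
  simp only [Pi.add_apply, Pi.smul_apply, smul_eq_mul]
  ring

private lemma lin_add_smul {n : ℕ} (c x y : Fin n → ℝ) (t : ℝ) :
    ∑ i, c i * (x + t • y) i = ∑ i, c i * x i + t * ∑ i, c i * y i := by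
  rw [Finset.mul_sum, ← Finset.sum_add_distrib]
  refine Finset.sum_congr rfl fun i _ => ?_
  simp only [Pi.add_apply, Pi.smul_apply, smul_eq_mul]
  ring

private lemma split_eq {a b s₁ s₂ c : ℝ} (ha : 0 < a) (hb : 0 < b)
    (h1 : c ≤ s₁) (h2 : c ≤ s₂) (he : a * s₁ + b * s₂ = c) (hab : a + b = 1) :
    s₁ = c ∧ s₂ = c := by
  have key : a * (s₁ - c) + b * (s₂ - c) = 0 := by linear_combination he - c * hab
  have n1 : 0 ≤ a * (s₁ - c) := mul_nonneg ha.le (by linarith)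
  have n2 : 0 ≤ b * (s₂ - c) := mul_nonneg hb.le (by linarith)
  have e1 : a * (s₁ - c) = 0 := by linarith
  have e2 : b * (s₂ - c) = 0 := by linarith
  constructor
  · rcases mul_eq_zero.1 e1 with h | h
    · exact absurd h ha.ne'
    · linarith
  · rcases mul_eq_zero.1 e2 with h | h
    · exact absurd h hb.ne'
    · linarith

theorem stmt9_aux {n : ℕ} (P : Set (Fin n → ℝ))
    (hpoly : ∃ H : Finset ((Fin n → ℝ) × ℝ), P = {x | ∀ h ∈ H, h.2 ≤ ∑ i, h.1 i * x i})
    (hsub : ∀ x ∈ P, ∀ i, 0 ≤ x i)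
    (habs : ∀ x ∈ P, ∀ w : Fin n → ℝ, (∀ i, 0 ≤ w i) → x + w ∈ P)
    (v : Fin n → ℝ) (hv : v ∈ P) :
    ∃ u w : Fin n → ℝ,
      (∃ Fc : Set (Fin n → ℝ), IsExtreme ℝ P Fc ∧ IsCompact Fc ∧ u ∈ Fc) ∧
      (∀ i, 0 ≤ w i) ∧ v = u + w := by
  classical
  obtain ⟨H, hP⟩ := hpoly
  have hcont : ∀ c : Fin n → ℝ, Continuous fun x : Fin n → ℝ => ∑ i, c i * x i :=
    fun c => continuous_finset_sum _ fun i _ => continuous_const.mul (continuous_apply i)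
  have hPmem : ∀ x, x ∈ P ↔ ∀ h ∈ H, h.2 ≤ ∑ i, h.1 i * x i := by
    intro x; rw [hP]; rfl
  -- the compact set K of points of P below v
  set K : Set (Fin n → ℝ) := {x | x ∈ P ∧ ∀ i, x i ≤ v i} with hK
  have hKne : K.Nonempty := ⟨v, hv, fun i => le_rfl⟩
  have hKclosed : IsClosed K := by
    have : K = (⋂ h ∈ H, {x : Fin n → ℝ | h.2 ≤ ∑ i, h.1 i * x i}) ∩ ⋂ i, {x | x i ≤ v i} := by
      ext x
      simp only [hK, Set.mem_setOf_eq, Set.mem_inter_iff, Set.mem_iInter, hPmem]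
    rw [this]
    exact ((isClosed_biInter fun h _ => isClosed_le continuous_const (hcont h.1)).inter
      (isClosed_iInter fun i => isClosed_le (continuous_apply i) continuous_const))
  have hKcpt : IsCompact K := by
    refine IsCompact.of_isClosed_subset (isCompact_univ_pi fun i => isCompact_Icc
      (a := (0:ℝ)) (b := v i)) hKclosed ?_
    intro x hx
    rw [Set.mem_univ_pi]
    exact fun i => ⟨hsub x hx.1 i, hx.2 i⟩
  -- minimize the coordinate sum over K
  obtain ⟨u, huK, humin⟩ := hKcpt.exists_isMinOn hKne
    ((continuous_finset_sum _ fun i _ => continuous_apply i).continuousOn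
      (f := fun x : Fin n → ℝ => ∑ i, x i))
  have huP : u ∈ P := huK.1
  have humin' : ∀ x ∈ K, ∑ i, u i ≤ ∑ i, x i := fun x hx => humin hx
  -- the face of active constraints at u
  set F : Set (Fin n → ℝ) :=
    {x | x ∈ P ∧ ∀ h ∈ H, ∑ i, h.1 i * u i = h.2 → ∑ i, h.1 i * x i = h.2} with hF
  have huF : u ∈ F := ⟨huP, fun h _ hh => hh⟩
  have hFP : F ⊆ P := fun x hx => hx.1
  have hFclosed : IsClosed F := by
    have : F = P ∩ ⋂ h ∈ H, ⋂ (_ : ∑ i, h.1 i * u i = h.2), {x : Fin n → ℝ | ∑ i, h.1 i * x i = h.2} := by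
      ext x
      simp only [hF, Set.mem_setOf_eq, Set.mem_inter_iff, Set.mem_iInter]
    rw [this]
    refine IsClosed.inter (hP ▸ ?_) (isClosed_biInter fun h _ => isClosed_iInter fun _ =>
      isClosed_eq (hcont h.1) continuous_const)
    have : {x : Fin n → ℝ | ∀ h ∈ H, h.2 ≤ ∑ i, h.1 i * x i}
        = ⋂ h ∈ H, {x : Fin n → ℝ | h.2 ≤ ∑ i, h.1 i * x i} := by
      ext x; simp
    rw [this]
    exact isClosed_biInter fun h _ => isClosed_le continuous_const (hcont h.1)
  have hFconv : Convex ℝ F := by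
    intro x hx y hy a b ha hb hab
    rcases eq_or_lt_of_le ha with rfl0 | ha'
    · simpa [← rfl0, (by linarith : b = 1)] using hy
    rcases eq_or_lt_of_le hb with rfl0 | hb'
    · simpa [← rfl0, (by linarith : a = 1)] using hx
    refine ⟨?_, ?_⟩
    · rw [hPmem]
      intro h hh
      rw [lin_combo]
      have h1 := (hPmem x).1 hx.1 h hh
      have h2 := (hPmem y).1 hy.1 h hh
      have e : a * h.2 + b * h.2 = h.2 := by linear_combination h.2 * hab
      linarith [mul_le_mul_of_nonneg_left h1 ha'.le, mul_le_mul_of_nonneg_left h2 hb'.le]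
    · intro h hh heq
      rw [lin_combo, hx.2 h hh heq, hy.2 h hh heq]
      linear_combination h.2 * hab
  have hFext : IsExtreme ℝ P F := by
    constructor
    · exact hFP
    · intro x₁ hx₁ x₂ hx₂ x hxF hseg
      obtain ⟨a, b, ha, hb, hab, hx⟩ := hseg
      have key : ∀ h ∈ H, ∑ i, h.1 i * u i = h.2 →
          (∑ i, h.1 i * x₁ i = h.2 ∧ ∑ i, h.1 i * x₂ i = h.2) := by
        intro h hh heq
        have h1 := (hPmem x₁).1 hx₁ h hh
        have h2 := (hPmem x₂).1 hx₂ h hh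
        have he : a * ∑ i, h.1 i * x₁ i + b * ∑ i, h.1 i * x₂ i = h.2 := by
          rw [← lin_combo, hx]
          exact hxF.2 h hh heq
        exact split_eq ha hb h1 h2 he hab
      exact ⟨hx₁, fun h hh heq => (key h hh heq).1⟩
  -- F is bounded, hence compact
  have hFbdd : Bornology.IsBounded F := by
    by_contra hub
    rw [isBounded_iff_forall_norm_le] at hub
    push_neg at hub
    -- nested compact sets of unit recession directions
    set C : ℕ → Set (Fin n → ℝ) :=
      fun k => {d | ‖d‖ = 1 ∧ ∀ s : ℝ, 0 ≤ s → s ≤ k → u + s • d ∈ F} with hC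
    have hCsub : ∀ k, C k ⊆ Metric.sphere 0 1 := by
      intro k d hd
      simpa [mem_sphere_zero_iff_norm] using hd.1
    have hCclosed : ∀ k, IsClosed (C k) := by
      intro k
      have : C k = {d : Fin n → ℝ | ‖d‖ = 1} ∩
          ⋂ s ∈ Set.Icc (0:ℝ) (k:ℝ), (fun d : Fin n → ℝ => u + s • d) ⁻¹' F := by
        ext d
        simp only [hC, Set.mem_setOf_eq, Set.mem_inter_iff, Set.mem_iInter, Set.mem_Icc,
          Set.mem_preimage, and_imp]
      rw [this]
      exact (isClosed_eq continuous_norm continuous_const).inter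
        (isClosed_biInter fun s _ => hFclosed.preimage
          (continuous_const.add (continuous_id.const_smul s)))
    have hCne : ∀ k, (C k).Nonempty := by
      intro k
      obtain ⟨x, hxF, hxn⟩ := hub (‖u‖ + k)
      have hr : (k : ℝ) < ‖x - u‖ := by
        have := norm_sub_norm_le x u
        linarith [this]
      have hrpos : (0:ℝ) < ‖x - u‖ := lt_of_le_of_lt (Nat.cast_nonneg k) hr
      refine ⟨‖x - u‖⁻¹ • (x - u), ?_, ?_⟩
      · rw [norm_smul, norm_inv, norm_norm]
        exact inv_mul_cancel₀ hrpos.ne'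
      · intro s hs hsk
        have hsr : s / ‖x - u‖ ≤ 1 := by
          rw [div_le_one hrpos]
          linarith
        have hmem := hFconv huF hxF (a := 1 - s / ‖x - u‖) (b := s / ‖x - u‖)
          (by linarith) (div_nonneg hs hrpos.le) (by ring)
        have : (1 - s / ‖x - u‖) • u + (s / ‖x - u‖) • x = u + s • (‖x - u‖⁻¹ • (x - u)) := by
          rw [div_eq_mul_inv]
          module
        rwa [this] at hmem
    -- extract a recession direction d
    obtain ⟨d, hd⟩ := IsCompact.nonempty_iInter_of_sequence_nonempty_isCompact_isClosed C
      (fun k => fun x hx => ⟨hx.1, fun s hs hsk => hx.2 s hs (by push_cast; linarith)⟩)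
      hCne (((isCompact_sphere (0 : Fin n → ℝ) 1).of_isClosed_subset (hCclosed 0) (hCsub 0)))
      hCclosed
    simp only [Set.mem_iInter] at hd
    have hdnorm : ‖d‖ = 1 := (hd 0).1
    have hray : ∀ s : ℝ, 0 ≤ s → u + s • d ∈ F := by
      intro s hs
      exact (hd ⌈s⌉₊).2 s hs (Nat.le_ceil s)
    -- d is nonnegative
    have hdpos : ∀ i, 0 ≤ d i := by
      intro i
      by_contra hneg
      push_neg at hneg
      have hui : 0 ≤ u i := hsub u huP i
      set s : ℝ := (u i + 1) / (-(d i)) with hs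
      have hs0 : 0 ≤ s := div_nonneg (by linarith) (by linarith)
      have hmem := hsub _ (hFP (hray s hs0)) i
      have : (u + s • d) i = u i + s * d i := rfl
      rw [this] at hmem
      have hdi : -d i ≠ 0 := by linarith
      have hsd : s * d i = -(u i + 1) := by
        rw [hs, div_mul_eq_mul_div, div_eq_iff hdi]
        ring
      linarith [hmem, hsd]
    -- d has a positive coordinate
    have hdsum : 0 < ∑ i, d i := by
      have hdne : d ≠ 0 := by
        intro h0
        rw [h0, norm_zero] at hdnorm
        norm_num at hdnorm
      have : ∃ i, d i ≠ 0 := by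
        by_contra hall
        push_neg at hall
        exact hdne (funext hall)
      obtain ⟨i, hi⟩ := this
      exact Finset.sum_pos' (fun j _ => hdpos j) ⟨i, Finset.mem_univ i, lt_of_le_of_ne (hdpos i) (Ne.symm hi)⟩
    -- active constraints vanish on d
    have hdact : ∀ h ∈ H, ∑ i, h.1 i * u i = h.2 → ∑ i, h.1 i * d i = 0 := by
      intro h hh heq
      have h1 : u + (1:ℝ) • d ∈ F := hray 1 zero_le_one
      have := h1.2 h hh heq
      rw [lin_add_smul, heq] at this
      linarith
    -- choose a small ε
    set S : Finset ℝ := insert (1:ℝ) ((H.filter (fun h => ∑ i, h.1 i * u i ≠ h.2)).image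
      fun h => (∑ i, h.1 i * u i - h.2) / (|∑ i, h.1 i * d i| + 1)) with hS
    have hSne : S.Nonempty := ⟨1, Finset.mem_insert_self _ _⟩
    set ε : ℝ := S.min' hSne with hε
    have hεpos : 0 < ε := by
      rw [hε]
      apply (Finset.lt_min'_iff S hSne).2
      intro t ht
      rw [hS, Finset.mem_insert] at ht
      rcases ht with rfl | ht
      · norm_num
      · obtain ⟨h, hh, rfl⟩ := Finset.mem_image.1 ht
        rw [Finset.mem_filter] at hh
        have hle := (hPmem u).1 huP h hh.1
        have hne := hh.2
        have hlt : h.2 < ∑ i, h.1 i * u i := lt_of_le_of_ne hle fun h' => hne h'.symm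
        exact div_pos (by linarith) (by positivity)
    have hεle : ∀ h ∈ H, ∑ i, h.1 i * u i ≠ h.2 →
        ε ≤ (∑ i, h.1 i * u i - h.2) / (|∑ i, h.1 i * d i| + 1) := by
      intro h hh hne
      apply Finset.min'_le
      rw [hS]
      exact Finset.mem_insert_of_mem (Finset.mem_image.2 ⟨h, Finset.mem_filter.2 ⟨hh, hne⟩, rfl⟩)
    -- the point u - ε d is in K and has smaller coordinate sum
    set x' : Fin n → ℝ := u + (-ε) • d with hx'
    have hx'P : x' ∈ P := by
      rw [hPmem]
      intro h hh
      rw [hx', lin_add_smul]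
      by_cases hact : ∑ i, h.1 i * u i = h.2
      · rw [hact, hdact h hh hact]
        simp
      · have hle := (hPmem u).1 huP h hh
        have hb := hεle h hh hact
        have habs' : |∑ i, h.1 i * d i| + 1 > 0 := by positivity
        have : ε * |∑ i, h.1 i * d i| ≤ ∑ i, h.1 i * u i - h.2 := by
          rw [div_eq_mul_inv] at hb
          have h2 : ε * (|∑ i, h.1 i * d i| + 1) ≤ ∑ i, h.1 i * u i - h.2 := by
            rw [← le_div_iff₀ habs']
            rw [div_eq_mul_inv]
            exact hb
          nlinarith [hεpos]
        have habs2 : ε * ∑ i, h.1 i * d i ≤ ε * |∑ i, h.1 i * d i| :=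
          mul_le_mul_of_nonneg_left (le_abs_self _) hεpos.le
        linarith
    have hx'K : x' ∈ K := by
      refine ⟨hx'P, fun i => ?_⟩
      have hxi : x' i = u i - ε * d i := by
        simp only [hx', Pi.add_apply, Pi.smul_apply, smul_eq_mul]
        ring
      rw [hxi]
      linarith [mul_nonneg hεpos.le (hdpos i), huK.2 i]
    have hcontra := humin' x' hx'K
    have hsx' : ∑ i, x' i = ∑ i, u i - ε * ∑ i, d i := by
      rw [hx']
      rw [Finset.mul_sum, ← Finset.sum_sub_distrib]
      refine Finset.sum_congr rfl fun i _ => ?_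
      simp only [Pi.add_apply, Pi.smul_apply, smul_eq_mul]
      ring
    rw [hsx'] at hcontra
    nlinarith [mul_pos hεpos hdsum]
  have hFcpt : IsCompact F := Metric.isCompact_of_isClosed_isBounded hFclosed hFbdd
  refine ⟨u, v - u, ⟨F, hFext, hFcpt, huF⟩, fun i => ?_, ?_⟩
  · simpa using sub_nonneg.2 (huK.2 i)
  · funext i; simp

/-- any point of a polyhedron in the nonnegative orthant absorbing the
orthant decomposes as a point on a compact face plus a nonnegative vector. -/
theorem stmt9 {n : ℕ} (P : Set (Fin n → ℝ)) (hpoly : IsPolyhedron P)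
    (hsub : ∀ x ∈ P, ∀ i, 0 ≤ x i)
    (habs : ∀ x ∈ P, ∀ w : Fin n → ℝ, (∀ i, 0 ≤ w i) → x + w ∈ P)
    (v : Fin n → ℝ) (hv : v ∈ P) :
    ∃ u w : Fin n → ℝ,
      (∃ Fc : Set (Fin n → ℝ), IsExtreme ℝ P Fc ∧ IsCompact Fc ∧ u ∈ Fc) ∧
      (∀ i, 0 ≤ w i) ∧ v = u + w := by
  exact stmt9_aux P hpoly hsub habs v hv
end

section
/- Let I be a monomial ideal of linear-power type with symbolic polyhedron SP(I) having vertices v₁,…,v_r, and let c be the least common multiple of all denominators of the coordinates of v₁,…,v_r. Then NP(I^{(c)}) = c·SP(I). -/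
open MvPolynomial Pointwise

set_option linter.unusedSectionVars false

namespace Stmt11Alg

variable {n : ℕ} {𝕜 : Type*} [Field 𝕜]

lemma monomial_mem_span_pow_of_le (S : Finset (Fin n)) (m : ℕ) (a : Fin n →₀ ℕ)
    (h : m ≤ ∑ i ∈ S, a i) :
    monomial a (1 : 𝕜) ∈ (Ideal.span ((fun i => (X i : MvPolynomial (Fin n) 𝕜)) ''
      (S : Set (Fin n)))) ^ m := by
  induction m generalizing a with
  | zero => simp
  | succ m ih =>
    have hpos : ∃ i ∈ S, 0 < a i := by
      by_contra hcon
      push_neg at hcon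
      have : ∑ i ∈ S, a i = 0 := Finset.sum_eq_zero fun i hi => Nat.le_zero.mp (hcon i hi)
      omega
    obtain ⟨i, hiS, hia⟩ := hpos
    have hsub : a - Finsupp.single i 1 + Finsupp.single i 1 = a := by
      ext i'
      rcases eq_or_ne i' i with rfl | h'
      · simp [Finsupp.single_apply]
        omega
      · simp [Finsupp.add_apply, Finsupp.tsub_apply, Finsupp.single_apply, Ne.symm h']
    have key : monomial a (1 : 𝕜) = monomial (a - Finsupp.single i 1) 1 * X i := by
      rw [X, monomial_mul, mul_one, hsub]
    rw [key, pow_succ]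
    refine Ideal.mul_mem_mul (ih _ ?_) (Ideal.subset_span ⟨i, hiS, rfl⟩)
    set d : Fin n →₀ ℕ := a - Finsupp.single i 1 with hd
    have h1 : d i = a i - 1 := by
      rw [hd]; simp [Finsupp.single_apply]
    have h2 : ∑ i' ∈ S.erase i, d i' = ∑ i' ∈ S.erase i, a i' := by
      refine Finset.sum_congr rfl fun i' hi' => ?_
      have hne := Finset.ne_of_mem_erase hi'
      rw [hd]
      simp [Finsupp.tsub_apply, Finsupp.single_apply, Ne.symm hne]
    have e1 : ∑ i' ∈ S, d i' = d i + ∑ i' ∈ S.erase i, d i' :=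
      (Finset.add_sum_erase S (fun i' => d i') hiS).symm
    have e2 : ∑ i' ∈ S, a i' = a i + ∑ i' ∈ S.erase i, a i' :=
      (Finset.add_sum_erase S (fun i' => a i') hiS).symm
    omega

lemma le_of_monomial_mem_span_pow (S : Finset (Fin n)) (m : ℕ) (a : Fin n →₀ ℕ)
    (h : monomial a (1 : 𝕜) ∈ (Ideal.span ((fun i => (X i : MvPolynomial (Fin n) 𝕜)) ''
      (S : Set (Fin n)))) ^ m) :
    m ≤ ∑ i ∈ S, a i := by
  set J : ℕ → Ideal (MvPolynomial (Fin n) 𝕜) := fun m =>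
    Ideal.span ((fun b => monomial b (1 : 𝕜)) '' {b : Fin n →₀ ℕ | m ≤ ∑ i ∈ S, b i}) with hJ
  have hmain : ∀ m, (Ideal.span ((fun i => (X i : MvPolynomial (Fin n) 𝕜)) ''
      (S : Set (Fin n)))) ^ m ≤ J m := by
    intro m
    induction m with
    | zero =>
      rw [pow_zero, Ideal.one_eq_top]
      have h1 : (1 : MvPolynomial (Fin n) 𝕜) ∈ J 0 :=
        Ideal.subset_span ⟨0, by simp, by simp⟩
      rw [(Ideal.eq_top_iff_one (J 0)).mpr h1]
    | succ m ih =>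
      rw [pow_succ]
      refine le_trans (Ideal.mul_mono_left ih) ?_
      rw [hJ]
      simp only
      rw [Ideal.span_mul_span]
      rw [Ideal.span_le]
      rintro p hp
      simp only [Set.mem_mul, Set.mem_iUnion, Set.mem_singleton_iff, Set.mem_image, exists_prop,
        Finset.mem_coe] at hp
      obtain ⟨q, ⟨b, hb, rfl⟩, r, ⟨i, hiS, rfl⟩, rfl⟩ := hp
      set e : Fin n →₀ ℕ := b + Finsupp.single i 1 with he
      have hkey : (fun b => monomial b (1:𝕜)) b * X i = monomial e 1 := by
        rw [X, monomial_mul, mul_one]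
      rw [hkey]
      refine Ideal.subset_span ⟨e, ?_, rfl⟩
      have hes : ∑ i' ∈ S, e i' = (∑ i' ∈ S, b i') + 1 := by
        have : ∀ i' ∈ S, e i' = b i' + (Finsupp.single i 1) i' := by
          intro i' _; rw [he]; simp
        rw [Finset.sum_congr rfl this, Finset.sum_add_distrib]
        rw [Finset.sum_eq_single i (fun i' _ h' => Finsupp.single_eq_of_ne h')
          (fun h' => absurd hiS h')]
        simp
      simp only [Set.mem_setOf_eq] at hb ⊢
      omega
  have := hmain m h
  rw [hJ] at this
  rw [mem_ideal_span_monomial_image] at this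
  have hsupp : a ∈ (monomial a (1:𝕜)).support := by
    classical
    rw [support_monomial]
    simp
  obtain ⟨b, hb, hba⟩ := this a hsupp
  calc m ≤ ∑ i ∈ S, b i := hb
    _ ≤ ∑ i ∈ S, a i := Finset.sum_le_sum fun i _ => hba i

end Stmt11Alg

namespace Stmt11Aux

variable {n : ℕ} {ι : Type*} [Fintype ι]

/-- The scaled symbolic polyhedron, as an explicit set. -/
def Pset (supp : ι → Finset (Fin n)) (b : ι → ℕ) : Set (Fin n → ℝ) :=
  {x | (∀ i, 0 ≤ x i) ∧ ∀ j, (b j : ℝ) ≤ ∑ i ∈ supp j, x i}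

/-- The natural points of the scaled symbolic polyhedron. -/
def Aset (supp : ι → Finset (Fin n)) (b : ι → ℕ) : Set (Fin n → ℝ) :=
  {x | ∃ a : Fin n →₀ ℕ, (∀ j, b j ≤ ∑ i ∈ supp j, a i) ∧ x = fun i => (a i : ℝ)}

lemma convex_Pset (supp : ι → Finset (Fin n)) (b : ι → ℕ) : Convex ℝ (Pset supp b) := by
  intro x hx y hy s t hs ht hst
  constructor
  · intro i
    have := hx.1 i
    have := hy.1 i
    simp only [Pi.add_apply, Pi.smul_apply, smul_eq_mul]
    nlinarith
  · intro j
    have hxj := hx.2 j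
    have hyj := hy.2 j
    simp only [Pi.add_apply, Pi.smul_apply, smul_eq_mul, Finset.sum_add_distrib,
      ← Finset.mul_sum]
    nlinarith

/-- Aset is closed under adding natural vectors. -/
lemma Aset_add_nat (supp : ι → Finset (Fin n)) (b : ι → ℕ) {p : Fin n → ℝ}
    (hp : p ∈ Aset supp b) (v : Fin n → ℕ) : (p + fun i => (v i : ℝ)) ∈ Aset supp b := by
  obtain ⟨a, ha, rfl⟩ := hp
  refine ⟨a + Finsupp.equivFunOnFinite.symm v, fun j => ?_, ?_⟩
  · refine le_trans (ha j) (Finset.sum_le_sum fun i _ => ?_)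
    simp [Finsupp.add_apply, Finsupp.equivFunOnFinite]
  · funext i
    simp [Finsupp.add_apply, Finsupp.coe_equivFunOnFinite_symm]

/-- Convex hull of Aset is closed under adding a single nonnegative coordinate. -/
lemma convexHull_Aset_add_single (supp : ι → Finset (Fin n)) (b : ι → ℕ) {y : Fin n → ℝ}
    (hy : y ∈ convexHull ℝ (Aset supp b)) (i : Fin n) {t : ℝ} (ht : 0 ≤ t) :
    y + Pi.single i t ∈ convexHull ℝ (Aset supp b) := by
  obtain ⟨N, hN⟩ := exists_nat_gt t
  have hN0 : (0:ℝ) < N := lt_of_le_of_lt ht hN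
  have hyN : y + (fun i' => ((Pi.single i N : Fin n → ℕ) i' : ℝ)) ∈ convexHull ℝ (Aset supp b) := by
    have : (fun p => p + fun i' => ((Pi.single i N : Fin n → ℕ) i' : ℝ)) '' (convexHull ℝ (Aset supp b))
        ⊆ convexHull ℝ (Aset supp b) := by
      have haff : (fun p : Fin n → ℝ => p + fun i' => ((Pi.single i N : Fin n → ℕ) i' : ℝ)) ''
          (convexHull ℝ (Aset supp b)) = convexHull ℝ
          ((fun p : Fin n → ℝ => p + fun i' => ((Pi.single i N : Fin n → ℕ) i' : ℝ)) '' (Aset supp b)) := by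
        have := (AffineEquiv.constVAdd ℝ (Fin n → ℝ)
          (fun i' => ((Pi.single i N : Fin n → ℕ) i' : ℝ))).toAffineMap.image_convexHull
          (Aset supp b)
        have e : (fun p : Fin n → ℝ => p + fun i' => ((Pi.single i N : Fin n → ℕ) i' : ℝ)) =
            ⇑(AffineEquiv.constVAdd ℝ (Fin n → ℝ)
              (fun i' => ((Pi.single i N : Fin n → ℕ) i' : ℝ))).toAffineMap := by
          funext p; exact add_comm _ _
        rw [e]; exact this
      rw [haff]
      refine convexHull_mono ?_
      rintro _ ⟨p, hp, rfl⟩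
      exact Aset_add_nat supp b hp _
    exact this ⟨y, hy, rfl⟩
  have hsingle : (fun i' => ((Pi.single i N : Fin n → ℕ) i' : ℝ)) = Pi.single i (N:ℝ) := by
    funext i'
    rcases eq_or_ne i' i with rfl | h'
    · simp
    · simp [Pi.single_eq_of_ne h']
  rw [hsingle] at hyN
  have hNne : (N:ℝ) ≠ 0 := ne_of_gt hN0
  have key : y + Pi.single i t = (1 - t/N) • y + (t/N) • (y + Pi.single i (N:ℝ)) := by
    rw [smul_add, ← add_assoc, ← add_smul]
    ring_nf
    rw [one_smul]
    congr 1
    funext i'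
    rcases eq_or_ne i' i with rfl | h'
    · simp only [Pi.smul_apply, Pi.single_eq_same, smul_eq_mul]
      field_simp
    · simp [Pi.single_eq_of_ne h']
  rw [key]
  exact (convex_convexHull ℝ (Aset supp b)) hy hyN
    (by rw [sub_nonneg]; exact div_le_one_of_le₀ hN.le hN0.le)
    (div_nonneg ht hN0.le) (by ring)


/-- Convex hull of Aset is closed under adding nonnegative vectors. -/
lemma convexHull_Aset_add_nonneg (supp : ι → Finset (Fin n)) (b : ι → ℕ) {y : Fin n → ℝ}
    (hy : y ∈ convexHull ℝ (Aset supp b)) {r : Fin n → ℝ} (hr : ∀ i, 0 ≤ r i) :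
    y + r ∈ convexHull ℝ (Aset supp b) := by
  have main : ∀ s : Finset (Fin n), y + (∑ i ∈ s, Pi.single i (r i)) ∈ convexHull ℝ (Aset supp b) := by
    intro s
    induction s using Finset.induction with
    | empty => simpa using hy
    | insert _ _ hnotmem ih =>
      rename_i i s
      rw [Finset.sum_insert hnotmem,
        add_comm (Pi.single i (r i)) (∑ x ∈ s, Pi.single x (r x)), ← add_assoc]
      exact convexHull_Aset_add_single supp b ih i (hr i)
  have : (∑ i, Pi.single i (r i)) = r := Finset.univ_sum_single r
  have hm := main Finset.univ
  rwa [this] at hm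


/-- If the tight-constraint kernel at `x` is trivial, `x` is an extreme point of `Pset`. -/
lemma extreme_of_trivial_kernel (supp : ι → Finset (Fin n)) (b : ι → ℕ) {x : Fin n → ℝ}
    (hx : x ∈ Pset supp b)
    (hK : ∀ d : Fin n → ℝ, (∀ i, x i = 0 → d i = 0) →
      (∀ j, (b j : ℝ) = ∑ i ∈ supp j, x i → ∑ i ∈ supp j, d i = 0) → d = 0) :
    x ∈ Set.extremePoints ℝ (Pset supp b) := by
  rw [mem_extremePoints]
  refine ⟨hx, fun x₁ hx₁ x₂ hx₂ hseg => ?_⟩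
  obtain ⟨s, t, hs, ht, hst, hcomb⟩ := hseg

  have key : ∀ s t : ℝ, 0 < s → 0 < t → s + t = 1 →
      ∀ z₁ z₂ : Fin n → ℝ, z₁ ∈ Pset supp b → z₂ ∈ Pset supp b →
      s • z₁ + t • z₂ = x → z₁ = x := by
    clear hcomb hs ht hst
    intro s t hs ht hst z₁ z₂ hz₁ hz₂ hc
    have hd : z₁ - x = 0 := by
      apply hK
      · intro i hi
        have h1 : s * z₁ i + t * z₂ i = 0 := by
          have := congrFun hc i
          simpa [hi] using this
        have e1 : 0 ≤ z₁ i := hz₁.1 i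
        have e2 : 0 ≤ z₂ i := hz₂.1 i
        have : z₁ i = 0 := by nlinarith
        simp [Pi.sub_apply, this, hi]
      · intro j hj
        have h1 : ∑ i ∈ supp j, (s • z₁ + t • z₂) i = ∑ i ∈ supp j, x i := by
          rw [hc]
        have h2 : s * ∑ i ∈ supp j, z₁ i + t * ∑ i ∈ supp j, z₂ i = (b j : ℝ) := by
          rw [hj]
          rw [← h1]
          simp [Finset.sum_add_distrib, Finset.mul_sum]
        have e1 := hz₁.2 j
        have e2 := hz₂.2 j
        have hz1 : ∑ i ∈ supp j, z₁ i = (b j : ℝ) := by nlinarith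
        have : ∑ i ∈ supp j, (z₁ - x) i = ∑ i ∈ supp j, z₁ i - ∑ i ∈ supp j, x i := by
          simp [Finset.sum_sub_distrib]
        rw [this, hz1, ← hj]
        ring
    have := sub_eq_zero.mp hd
    exact this
  constructor
  · exact key s t hs ht hst x₁ x₂ hx₁ hx₂ hcomb
  · refine key t s ht hs (by linarith) x₂ x₁ hx₂ hx₁ ?_
    rw [add_comm]
    exact hcomb


open scoped Classical in
/-- Number of non-tight constraints at `x`. -/
noncomputable def slack (supp : ι → Finset (Fin n)) (b : ι → ℕ) (x : Fin n → ℝ) : ℕ :=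
  (Finset.univ.filter fun i : Fin n => 0 < x i).card +
    (Finset.univ.filter fun j : ι => (b j : ℝ) < ∑ i ∈ supp j, x i).card

open scoped Classical in
/-- Moving from `x` in a bounded feasible direction reaches a point with fewer slack
constraints. -/
lemma step_lemma (supp : ι → Finset (Fin n)) (b : ι → ℕ) {x : Fin n → ℝ}
    (hx : x ∈ Pset supp b) (e : Fin n → ℝ)
    (he1 : ∀ i, x i = 0 → e i = 0)
    (he2 : ∀ j, (b j : ℝ) = ∑ i ∈ supp j, x i → ∑ i ∈ supp j, e i = 0)
    (hBdd : (∃ i, e i < 0) ∨ ∃ j, ∑ i ∈ supp j, e i < 0) :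
    ∃ t : ℝ, 0 < t ∧ x + t • e ∈ Pset supp b ∧
      slack supp b (x + t • e) < slack supp b x := by
  set F1 : Finset (Fin n) := Finset.univ.filter (fun i => e i < 0) with hF1
  set F2 : Finset ι := Finset.univ.filter (fun j => ∑ i ∈ supp j, e i < 0) with hF2
  have hne : (F1.disjSum F2).Nonempty := by
    rcases hBdd with ⟨i, hi⟩ | ⟨j, hj⟩
    · exact ⟨Sum.inl i, Finset.inl_mem_disjSum.mpr (Finset.mem_filter.mpr ⟨Finset.mem_univ _, hi⟩)⟩
    · exact ⟨Sum.inr j, Finset.inr_mem_disjSum.mpr (Finset.mem_filter.mpr ⟨Finset.mem_univ _, hj⟩)⟩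
  set ratio : Fin n ⊕ ι → ℝ := Sum.elim (fun i => x i / (-e i))
    (fun j => ((∑ i ∈ supp j, x i) - b j) / (-(∑ i ∈ supp j, e i))) with hratio
  set t := (F1.disjSum F2).inf' hne ratio with htdef
  -- positivity facts
  have hxpos : ∀ i, e i < 0 → 0 < x i := by
    intro i hi
    rcases lt_or_eq_of_le (hx.1 i) with h | h
    · exact h
    · exact absurd (he1 i h.symm) (ne_of_lt hi)
  have hsumpos : ∀ j, ∑ i ∈ supp j, e i < 0 → (b j : ℝ) < ∑ i ∈ supp j, x i := by
    intro j hj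
    rcases lt_or_eq_of_le (hx.2 j) with h | h
    · exact h
    · exact absurd (he2 j h) (ne_of_lt hj)
  have hposElt : ∀ p ∈ F1.disjSum F2, 0 < ratio p := by
    rintro (i | j) hp
    · have hi : e i < 0 := (Finset.mem_filter.mp (Finset.inl_mem_disjSum.mp hp)).2
      exact div_pos (hxpos i hi) (by linarith)
    · have hj : ∑ i ∈ supp j, e i < 0 := (Finset.mem_filter.mp (Finset.inr_mem_disjSum.mp hp)).2
      have := hsumpos j hj
      exact div_pos (by linarith) (by linarith)
  have ht0 : 0 < t := (Finset.lt_inf'_iff hne).mpr hposElt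
  have huppI : ∀ i, e i < 0 → t * (-e i) ≤ x i := by
    intro i hi
    have hmem : Sum.inl i ∈ F1.disjSum F2 :=
      Finset.inl_mem_disjSum.mpr (Finset.mem_filter.mpr ⟨Finset.mem_univ _, hi⟩)
    have := Finset.inf'_le ratio hmem
    rw [← htdef] at this
    have hpos : (0:ℝ) < -e i := by linarith
    calc t * (-e i) ≤ (x i / (-e i)) * (-e i) := by
          apply mul_le_mul_of_nonneg_right _ hpos.le
          simpa [hratio] using this
      _ = x i := div_mul_cancel₀ _ (ne_of_gt hpos)
  have huppJ : ∀ j, ∑ i ∈ supp j, e i < 0 →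
      t * (-(∑ i ∈ supp j, e i)) ≤ (∑ i ∈ supp j, x i) - b j := by
    intro j hj
    have hmem : Sum.inr j ∈ F1.disjSum F2 :=
      Finset.inr_mem_disjSum.mpr (Finset.mem_filter.mpr ⟨Finset.mem_univ _, hj⟩)
    have := Finset.inf'_le ratio hmem
    rw [← htdef] at this
    have hpos : (0:ℝ) < -(∑ i ∈ supp j, e i) := by linarith
    calc t * (-(∑ i ∈ supp j, e i))
        ≤ (((∑ i ∈ supp j, x i) - b j) / (-(∑ i ∈ supp j, e i))) * (-(∑ i ∈ supp j, e i)) := by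
          apply mul_le_mul_of_nonneg_right _ hpos.le
          simpa [hratio] using this
      _ = (∑ i ∈ supp j, x i) - b j := div_mul_cancel₀ _ (ne_of_gt hpos)
  have hysum : ∀ j, ∑ i ∈ supp j, (x + t • e) i
      = (∑ i ∈ supp j, x i) + t * ∑ i ∈ supp j, e i := by
    intro j
    simp [Finset.sum_add_distrib, Finset.mul_sum]
  have hymem : x + t • e ∈ Pset supp b := by
    constructor
    · intro i
      rcases le_or_gt 0 (e i) with h | h
      · have : 0 ≤ t * e i := mul_nonneg ht0.le h
        simp only [Pi.add_apply, Pi.smul_apply, smul_eq_mul]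
        linarith [hx.1 i]
      · have := huppI i h
        simp only [Pi.add_apply, Pi.smul_apply, smul_eq_mul]
        nlinarith
    · intro j
      rw [hysum j]
      rcases le_or_gt 0 (∑ i ∈ supp j, e i) with h | h
      · have : 0 ≤ t * ∑ i ∈ supp j, e i := mul_nonneg ht0.le h
        linarith [hx.2 j]
      · have := huppJ j h
        nlinarith
  refine ⟨t, ht0, hymem, ?_⟩
  -- slack decreases
  set y := x + t • e with hy
  have hyapp : ∀ i, y i = x i + t * e i := by intro i; simp [hy]
  have hsub1 : (Finset.univ.filter fun i : Fin n => 0 < y i)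
      ⊆ (Finset.univ.filter fun i : Fin n => 0 < x i) := by
    intro i hi
    have hyi : 0 < y i := (Finset.mem_filter.mp hi).2
    refine Finset.mem_filter.mpr ⟨Finset.mem_univ _, ?_⟩
    rcases lt_or_eq_of_le (hx.1 i) with h | h
    · exact h
    · exfalso
      have he0 := he1 i h.symm
      rw [hyapp i, ← h, he0] at hyi
      simp at hyi
  have hsub2 : (Finset.univ.filter fun j : ι => (b j : ℝ) < ∑ i ∈ supp j, y i)
      ⊆ (Finset.univ.filter fun j : ι => (b j : ℝ) < ∑ i ∈ supp j, x i) := by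
    intro j hj
    have hyj : (b j : ℝ) < ∑ i ∈ supp j, y i := (Finset.mem_filter.mp hj).2
    refine Finset.mem_filter.mpr ⟨Finset.mem_univ _, ?_⟩
    rcases lt_or_eq_of_le (hx.2 j) with h | h
    · exact h
    · exfalso
      have he0 := he2 j h
      rw [hy, hysum j, he0, mul_zero, add_zero, ← h] at hyj
      simp at hyj
  obtain ⟨p, hpmem, hpeq⟩ := Finset.exists_mem_eq_inf' hne ratio
  rw [← htdef] at hpeq
  have main : slack supp b y < slack supp b x := by
    rcases p with i | j
    · have hi : e i < 0 := (Finset.mem_filter.mp (Finset.inl_mem_disjSum.mp hpmem)).2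
      have hyi : y i = 0 := by
        rw [hyapp i, hpeq]
        have hne' : -e i ≠ 0 := by simpa using ne_of_gt (by linarith : (0:ℝ) < -e i)
        simp only [hratio, Sum.elim_inl]
        have hei : e i ≠ 0 := ne_of_lt hi
        field_simp
        ring
      have hstrict : (Finset.univ.filter fun i : Fin n => 0 < y i)
          ⊂ (Finset.univ.filter fun i : Fin n => 0 < x i) := by
        refine Finset.ssubset_iff_of_subset hsub1 |>.mpr ?_
        refine ⟨i, Finset.mem_filter.mpr ⟨Finset.mem_univ _, hxpos i hi⟩, ?_⟩
        simp [hyi]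
      exact Nat.add_lt_add_of_lt_of_le (Finset.card_lt_card hstrict)
        (Finset.card_le_card hsub2)
    · have hj : ∑ i ∈ supp j, e i < 0 :=
        (Finset.mem_filter.mp (Finset.inr_mem_disjSum.mp hpmem)).2
      have hyj : ∑ i ∈ supp j, y i = (b j : ℝ) := by
        rw [hy, hysum j, hpeq]
        have hne' : -(∑ i ∈ supp j, e i) ≠ 0 := by
          simpa using ne_of_gt (by linarith : (0:ℝ) < -(∑ i ∈ supp j, e i))
        simp only [hratio, Sum.elim_inr]
        have hes : ∑ i ∈ supp j, e i ≠ 0 := ne_of_lt hj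
        field_simp
        ring
      have hstrict : (Finset.univ.filter fun j : ι => (b j : ℝ) < ∑ i ∈ supp j, y i)
          ⊂ (Finset.univ.filter fun j : ι => (b j : ℝ) < ∑ i ∈ supp j, x i) := by
        refine Finset.ssubset_iff_of_subset hsub2 |>.mpr ?_
        refine ⟨j, Finset.mem_filter.mpr ⟨Finset.mem_univ _, hsumpos j hj⟩, ?_⟩
        simp [hyj]
      exact Nat.add_lt_add_of_le_of_lt (Finset.card_le_card hsub1)
        (Finset.card_lt_card hstrict)
  exact main


/-- Main geometric lemma: if every extreme point of the polyhedron is a natural point, then the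
polyhedron is contained in the convex hull of its natural points. -/
lemma Pset_subset_convexHull_Aset (supp : ι → Finset (Fin n)) (b : ι → ℕ)
    (hext : ∀ v ∈ Set.extremePoints ℝ (Pset supp b), v ∈ Aset supp b) :
    Pset supp b ⊆ convexHull ℝ (Aset supp b) := by
  classical
  suffices H : ∀ k, ∀ x ∈ Pset supp b, slack supp b x < k → x ∈ convexHull ℝ (Aset supp b) by
    intro x hx
    exact H (slack supp b x + 1) x hx (Nat.lt_succ_self _)
  intro k
  induction k with
  | zero => exact fun x _ h => absurd h (Nat.not_lt_zero _)
  | succ k IH =>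
    intro x hx hsl
    by_cases hK : ∀ d : Fin n → ℝ, (∀ i, x i = 0 → d i = 0) →
        (∀ j, (b j : ℝ) = ∑ i ∈ supp j, x i → ∑ i ∈ supp j, d i = 0) → d = 0
    · exact subset_convexHull ℝ _ (hext x (extreme_of_trivial_kernel supp b hx hK))
    · push_neg at hK
      obtain ⟨d, hd1, hd2, hd0⟩ := hK
      have hd1' : ∀ i, x i = 0 → (-d) i = 0 := by
        intro i hi; simp [hd1 i hi]
      have hd2' : ∀ j, (b j : ℝ) = ∑ i ∈ supp j, x i → ∑ i ∈ supp j, (-d) i = 0 := by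
        intro j hj
        simp only [Pi.neg_apply, Finset.sum_neg_distrib]
        simp [hd2 j hj]
      by_cases hBd : (∃ i, d i < 0) ∨ ∃ j, ∑ i ∈ supp j, d i < 0
      · obtain ⟨t, ht0, hyt, hslt⟩ := step_lemma supp b hx d hd1 hd2 hBd
        have hy : x + t • d ∈ convexHull ℝ (Aset supp b) :=
          IH _ hyt (by omega)
        by_cases hBd' : (∃ i, (-d) i < 0) ∨ ∃ j, ∑ i ∈ supp j, (-d) i < 0
        · obtain ⟨s, hs0, hzs, hsls⟩ := step_lemma supp b hx (-d) hd1' hd2' hBd'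
          have hz : x + s • (-d) ∈ convexHull ℝ (Aset supp b) :=
            IH _ hzs (by omega)
          have hst : (0:ℝ) < s + t := by linarith
          have hcomb : (s/(s+t)) • (x + t • d) + (t/(s+t)) • (x + s • (-d)) = x := by
            funext i
            simp only [Pi.add_apply, Pi.smul_apply, Pi.neg_apply, smul_eq_mul]
            field_simp
            ring
          rw [← hcomb]
          exact (convex_convexHull ℝ (Aset supp b)) hy hz
            (div_nonneg hs0.le hst.le) (div_nonneg ht0.le hst.le)
            (by field_simp)
        · push_neg at hBd'
          have hr : ∀ i, 0 ≤ t • (-d) i := by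
            intro i
            have := hBd'.1 i
            simp only [Pi.neg_apply, not_lt] at this ⊢
            exact mul_nonneg ht0.le (by simpa using this)
          have : (x + t • d) + (fun i => t • (-d) i) = x := by
            funext i
            simp only [Pi.add_apply, Pi.smul_apply, Pi.neg_apply, smul_eq_mul]
            ring
          rw [← this]
          exact convexHull_Aset_add_nonneg supp b hy hr
      · push_neg at hBd
        by_cases hBd' : (∃ i, (-d) i < 0) ∨ ∃ j, ∑ i ∈ supp j, (-d) i < 0
        · obtain ⟨t, ht0, hyt, hslt⟩ := step_lemma supp b hx (-d) hd1' hd2' hBd'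
          have hy : x + t • (-d) ∈ convexHull ℝ (Aset supp b) :=
            IH _ hyt (by omega)
          have hr : ∀ i, 0 ≤ t • d i := by
            intro i
            have := hBd.1 i
            exact mul_nonneg ht0.le this
          have : (x + t • (-d)) + (fun i => t • d i) = x := by
            funext i
            simp only [Pi.add_apply, Pi.smul_apply, Pi.neg_apply, smul_eq_mul]
            ring
          rw [← this]
          exact convexHull_Aset_add_nonneg supp b hy hr
        · push_neg at hBd'
          exfalso
          apply hd0
          funext i
          have h1 := hBd.1 i
          have h2 := hBd'.1 i
          simp only [Pi.neg_apply] at h2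
          have : d i = 0 := le_antisymm (by linarith) h1
          simpa using this

end Stmt11Aux

section Assembly

open Stmt11Alg Stmt11Aux

variable {n : ℕ} {𝕜 : Type*} [Field 𝕜] {ι : Type*} [Fintype ι]

lemma smul_SPset_eq_Pset (supp : ι → Finset (Fin n)) (ω : ι → ℕ) (c : ℕ) (hc0 : 0 < c) :
    (c : ℝ) • SPset supp ω = Pset supp (fun j => c * ω j) := by
  have hc : (0:ℝ) < c := by exact_mod_cast hc0
  ext x
  constructor
  · rintro ⟨y, hy, rfl⟩
    constructor
    · intro i
      simp only [Pi.smul_apply, smul_eq_mul]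
      exact mul_nonneg hc.le (hy.1 i)
    · intro j
      have := hy.2 j
      push_cast
      simp only [Pi.smul_apply, smul_eq_mul, ← Finset.mul_sum]
      exact mul_le_mul_of_nonneg_left this hc.le
  · intro hx
    refine ⟨(c:ℝ)⁻¹ • x, ⟨fun i => ?_, fun j => ?_⟩, ?_⟩
    · simp only [Pi.smul_apply, smul_eq_mul]
      exact mul_nonneg (by positivity) (hx.1 i)
    · have h := hx.2 j
      push_cast at h
      simp only [Pi.smul_apply, smul_eq_mul, ← Finset.mul_sum]
      calc (ω j : ℝ) = (c:ℝ)⁻¹ * ((c:ℝ) * ω j) := by field_simp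
        _ ≤ (c:ℝ)⁻¹ * ∑ i ∈ supp j, x i :=
            mul_le_mul_of_nonneg_left h (by positivity)
    · funext i
      simp only [Pi.smul_apply, smul_eq_mul]
      field_simp

lemma extreme_Pset_natural (supp : ι → Finset (Fin n)) (ω : ι → ℕ) (c : ℕ) (hc0 : 0 < c)
    (hcint : ∀ v ∈ Set.extremePoints ℝ (SPset supp ω), ∀ i, ∃ z : ℤ, (c : ℝ) * v i = z) :
    ∀ v ∈ Set.extremePoints ℝ (Pset supp (fun j => c * ω j)),
      v ∈ Aset supp (fun j => c * ω j) := by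
  intro v hv
  have hc : (0:ℝ) < c := by exact_mod_cast hc0
  have hcne : (c:ℝ) ≠ 0 := ne_of_gt hc
  set u : Fin n → ℝ := (c:ℝ)⁻¹ • v with hu
  have hvP : v ∈ Pset supp (fun j => c * ω j) := hv.1
  have huS : u ∈ SPset supp ω := by
    constructor
    · intro i
      simp only [hu, Pi.smul_apply, smul_eq_mul]
      exact mul_nonneg (by positivity) (hvP.1 i)
    · intro j
      have h := hvP.2 j
      push_cast at h
      simp only [hu, Pi.smul_apply, smul_eq_mul, ← Finset.mul_sum]
      calc (ω j : ℝ) = (c:ℝ)⁻¹ * ((c:ℝ) * ω j) := by field_simp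
        _ ≤ (c:ℝ)⁻¹ * ∑ i ∈ supp j, v i :=
            mul_le_mul_of_nonneg_left h (by positivity)
  have hsmul : ∀ y : Fin n → ℝ, y ∈ SPset supp ω →
      (c:ℝ) • y ∈ Pset supp (fun j => c * ω j) := by
    intro y hy
    constructor
    · intro i
      simp only [Pi.smul_apply, smul_eq_mul]
      exact mul_nonneg hc.le (hy.1 i)
    · intro j
      have := hy.2 j
      push_cast
      simp only [Pi.smul_apply, smul_eq_mul, ← Finset.mul_sum]
      exact mul_le_mul_of_nonneg_left this hc.le
  have huext : u ∈ Set.extremePoints ℝ (SPset supp ω) := by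
    rw [mem_extremePoints]
    refine ⟨huS, fun y hy z hz hseg => ?_⟩
    obtain ⟨s, t, hs, ht, hst, hcomb⟩ := hseg
    have hvseg : s • ((c:ℝ) • y) + t • ((c:ℝ) • z) = v := by
      have : (c:ℝ) • (s • y + t • z) = v := by
        rw [hcomb, hu, smul_inv_smul₀ hcne]
      rw [← this, smul_add, smul_comm s, smul_comm t]
    have := (mem_extremePoints.1 hv).2 _ (hsmul y hy) _ (hsmul z hz) ⟨s, t, hs, ht, hst, hvseg⟩
    constructor
    · rw [hu, ← this.1, inv_smul_smul₀ hcne]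
    · rw [hu, ← this.2, inv_smul_smul₀ hcne]
  choose z hz using hcint u huext
  have hvz : ∀ i, v i = (z i : ℝ) := by
    intro i
    rw [← hz i, hu]
    simp only [Pi.smul_apply, smul_eq_mul]
    field_simp
  have hznn : ∀ i, 0 ≤ z i := by
    intro i
    have := hvP.1 i
    rw [hvz i] at this
    exact_mod_cast this
  set aFun : Fin n → ℕ := fun i => (z i).toNat with haFun
  have hva : ∀ i, v i = (aFun i : ℝ) := by
    intro i
    rw [hvz i, haFun]
    exact_mod_cast (Int.toNat_of_nonneg (hznn i)).symm
  refine ⟨Finsupp.equivFunOnFinite.symm aFun, fun j => ?_, ?_⟩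
  · have := hvP.2 j
    have hsum : ∑ i ∈ supp j, v i = ((∑ i ∈ supp j, aFun i : ℕ) : ℝ) := by
      push_cast
      exact Finset.sum_congr rfl fun i _ => hva i
    rw [hsum] at this
    have h2 : ((c * ω j : ℕ) : ℝ) ≤ ((∑ i ∈ supp j, aFun i : ℕ) : ℝ) := by push_cast at this ⊢; linarith
    have h3 : c * ω j ≤ ∑ i ∈ supp j, aFun i := by exact_mod_cast h2
    refine le_trans h3 (le_of_eq ?_)
    exact Finset.sum_congr rfl fun i _ => by simp [Finsupp.coe_equivFunOnFinite_symm]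
  · funext i
    rw [hva i]
    simp [Finsupp.coe_equivFunOnFinite_symm]

end Assembly

/-- with `c` the lcm of the denominators of the coordinates of the vertices
of `SP(I)`, one has `NP(I^{(c)}) = c · SP(I)`. -/
theorem stmt11 {n : ℕ} {𝕜 : Type*} [Field 𝕜] {ι : Type*} [Fintype ι] [Nonempty ι]
    (supp : ι → Finset (Fin n)) (hsupp : ∀ j, (supp j).Nonempty)
    (ω : ι → ℕ) (hω : ∀ j, 0 < ω j)
    (c : ℕ) (hc0 : 0 < c)
    (hcint : ∀ v ∈ Set.extremePoints ℝ (SPset supp ω), ∀ i, ∃ z : ℤ, (c : ℝ) * v i = z)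
    (hcmin : ∀ m : ℕ, 0 < m →
      (∀ v ∈ Set.extremePoints ℝ (SPset supp ω), ∀ i, ∃ z : ℤ, (m : ℝ) * v i = z) → c ∣ m) :
    NP (symb (𝕜 := 𝕜) supp ω c) = (c : ℝ) • SPset supp ω := by
  classical
  rw [smul_SPset_eq_Pset supp ω c hc0]
  set b : ι → ℕ := fun j => c * ω j with hb
  have hgen : {x : Fin n → ℝ | ∃ a : Fin n →₀ ℕ, monomial a (1 : 𝕜) ∈ symb supp ω c ∧
      x = fun i => (a i : ℝ)} = Stmt11Aux.Aset supp b := by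
    ext x
    constructor
    · rintro ⟨a, ha, rfl⟩
      refine ⟨a, fun j => ?_, rfl⟩
      rw [symb, Submodule.mem_iInf] at ha
      exact Stmt11Alg.le_of_monomial_mem_span_pow (supp j) (c * ω j) a (ha j)
    · rintro ⟨a, ha, rfl⟩
      refine ⟨a, ?_, rfl⟩
      rw [symb, Submodule.mem_iInf]
      intro j
      exact Stmt11Alg.monomial_mem_span_pow_of_le (supp j) (c * ω j) a (ha j)
  rw [NP, hgen]
  apply Set.Subset.antisymm
  · refine convexHull_min ?_ (Stmt11Aux.convex_Pset supp b)
    rintro _ ⟨a, ha, rfl⟩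
    constructor
    · intro i
      positivity
    · intro j
      have := ha j
      have hcast : ((∑ i ∈ supp j, a i : ℕ) : ℝ) = ∑ i ∈ supp j, (a i : ℝ) := by push_cast; rfl
      rw [← hcast]
      exact_mod_cast this
  · exact Stmt11Aux.Pset_subset_convexHull_Aset supp b
      (extreme_Pset_natural supp ω c hc0 hcint)
end

section
/- Let I be a monomial ideal of linear-power type with vertices v₁,…,v_r of SP(I), and let c = lcm of the denominators of the coordinates of the v_i. If d is any positive integer with NP(I^{(d)}) = d·SP(I), then c divides d. In particular, c is the smallest such integer. -/
open MvPolynomial Pointwise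

/-- `c` divides any positive `d` with `NP(I^{(d)}) = d · SP(I)`. -/
theorem stmt12 {n : ℕ} {𝕜 : Type*} [Field 𝕜] {ι : Type*} [Fintype ι] [Nonempty ι]
    (supp : ι → Finset (Fin n)) (hsupp : ∀ j, (supp j).Nonempty)
    (ω : ι → ℕ) (hω : ∀ j, 0 < ω j)
    (c : ℕ) (hc0 : 0 < c)
    (hcint : ∀ v ∈ Set.extremePoints ℝ (SPset supp ω), ∀ i, ∃ z : ℤ, (c : ℝ) * v i = z)
    (hcmin : ∀ m : ℕ, 0 < m →
      (∀ v ∈ Set.extremePoints ℝ (SPset supp ω), ∀ i, ∃ z : ℤ, (m : ℝ) * v i = z) → c ∣ m)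
    (d : ℕ) (hd0 : 0 < d)
    (hd : NP (symb (𝕜 := 𝕜) supp ω d) = (d : ℝ) • SPset supp ω) :
    c ∣ d := by
  apply hcmin d hd0
  intro v hv i
  -- `d • v` is an extreme point of `d • SPset supp ω = NP (symb supp ω d)`
  have hdne : (d : ℝ) ≠ 0 := Nat.cast_ne_zero.mpr hd0.ne'
  have hmem : (d : ℝ) • v ∈ Set.extremePoints ℝ ((d : ℝ) • SPset supp ω) := by
    refine ⟨Set.smul_mem_smul_set hv.1, ?_⟩
    rintro y₁ ⟨z₁, hz₁, rfl⟩ y₂ ⟨z₂, hz₂, rfl⟩ hseg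
    obtain ⟨p, q, hp, hq, hpq, hsum⟩ := hseg
    have hx : v ∈ openSegment ℝ z₁ z₂ := by
      refine ⟨p, q, hp, hq, hpq, ?_⟩
      apply smul_right_injective (Fin n → ℝ) hdne
      show (d:ℝ) • (p • z₁ + q • z₂) = (d:ℝ) • v
      rw [← hsum, smul_add, smul_comm, smul_comm (d:ℝ) q]
    have h1 := hv.2 hz₁ hz₂ hx
    rw [h1]
  rw [← hd] at hmem
  have := extremePoints_convexHull_subset hmem
  obtain ⟨a, -, ha⟩ := this
  refine ⟨a i, ?_⟩
  have := congrFun ha i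
  simpa [Pi.smul_apply, eq_comm] using this
end
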